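/- arXiv:2205.15425 — 5 statements merged into one kernel-verified Lean document; each statement's English description precedes it below -/
import Mathlib

section
/- If G is a graph whose maximum degree Δ(G) is even, then G is not of class 2^±; that is, there exists a signature σ (namely the all-positive signature) with χ'(G, σ) = Δ(G). -/
open SimpleGraph

namespace Signed

variable {V : Type*}

/-- The color set `M n`. -/
def colorSet (n : ℕ) : Set ℤ :=
  {m : ℤ | 2 * m.natAbs ≤ n ∧ (Even n → m ≠ 0)}

/-- `f` is an `n`-edge-coloring of the signed graph `(G, σ)`. -/
def IsEdgeColoring (G : SimpleGraph V) (σ : Sym2 V → ℤ) (n : ℕ)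
    (f : V → Sym2 V → ℤ) : Prop :=
  (∀ u v, G.Adj u v → f u s(u, v) ∈ colorSet n) ∧
  (∀ u v, G.Adj u v → f u s(u, v) = - σ s(u, v) * f v s(u, v)) ∧
  (∀ u v w, G.Adj u v → G.Adj u w → v ≠ w → f u s(u, v) ≠ f u s(u, w))

/-- `(G, σ)` admits an `n`-edge-coloring. -/
def Colorable (G : SimpleGraph V) (σ : Sym2 V → ℤ) (n : ℕ) : Prop :=
  ∃ f, IsEdgeColoring G σ n f

/-- The signed chromatic index. -/
noncomputable def chromIndex (G : SimpleGraph V) (σ : Sym2 V → ℤ) : ℕ :=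
  sInf {n | Colorable G σ n}

/-- `σ` is a signature on `G`: it takes values `±1` on edges. -/
def IsSignature (G : SimpleGraph V) (σ : Sym2 V → ℤ) : Prop :=
  ∀ e ∈ G.edgeSet, σ e = 1 ∨ σ e = -1

/-- Maximum degree (classical decidability). -/
noncomputable def maxDeg [Fintype V] (G : SimpleGraph V) : ℕ :=
  @SimpleGraph.maxDegree V G _ (Classical.decRel _)

/-- degree of a vertex, instance-free. -/
noncomputable def deg (G : SimpleGraph V) (v : V) : ℕ :=
  (G.neighborSet v).ncard

/-- A signed graph is balanced if every cycle has sign product `1`. -/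
def Balanced (H : SimpleGraph V) (σ : Sym2 V → ℤ) : Prop :=
  ∀ (u : V) (w : H.Walk u u), w.IsCycle → (w.edges.map σ).prod = 1

/-- A set of edges of `G` forming a matching. -/
def IsMatchingSet (G : SimpleGraph V) (M : Set (Sym2 V)) : Prop :=
  M ⊆ G.edgeSet ∧ ∀ e ∈ M, ∀ e' ∈ M, ∀ v : V, v ∈ e → v ∈ e' → e = e'

/-- `H` is a path graph: some path walk carries all of its edges. -/
def IsPathGraph (H : SimpleGraph V) : Prop :=
  ∃ (u v : V) (p : H.Walk u v), p.IsPath ∧ ∀ e, e ∈ H.edgeSet ↔ e ∈ p.edges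

/-- Class `1^±`. -/
def Class1pm [Fintype V] (G : SimpleGraph V) : Prop :=
  ∀ σ : Sym2 V → ℤ, IsSignature G σ → chromIndex G σ = maxDeg G

/-- Class `2^±`. -/
def Class2pm [Fintype V] (G : SimpleGraph V) : Prop :=
  ∀ σ : Sym2 V → ℤ, IsSignature G σ → chromIndex G σ = maxDeg G + 1

end Signed

open Signed SimpleGraph



namespace SignedAux
open Finset


lemma matrixFill {V : Type*} [Fintype V] :
    ∀ (n : ℕ) (r c : V → ℕ), ∑ v, r v = n → ∑ v, c v = n →
    ∃ M : V → V → ℕ, (∀ v, ∑ w, M v w = r v) ∧ (∀ w, ∑ v, M v w = c w) := by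
  classical
  intro n
  induction n with
  | zero =>
    intro r c hr hc
    refine ⟨fun _ _ => 0, fun v => ?_, fun w => ?_⟩ <;> simp only [Finset.sum_const_zero]
    · have := (Finset.sum_eq_zero_iff (s := univ) (f := r)).mp hr v (mem_univ v)
      omega
    · have := (Finset.sum_eq_zero_iff (s := univ) (f := c)).mp hc w (mem_univ w)
      omega
  | succ n ih =>
    intro r c hr hc
    have hrpos : ∃ v, 0 < r v := by
      by_contra hk; push_neg at hk
      simp only [Nat.le_zero] at hk
      rw [Finset.sum_congr rfl fun v _ => hk v] at hr
      simp at hr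
    have hcpos : ∃ w, 0 < c w := by
      by_contra hk; push_neg at hk
      simp only [Nat.le_zero] at hk
      rw [Finset.sum_congr rfl fun v _ => hk v] at hc
      simp at hc
    obtain ⟨v₀, hv₀⟩ := hrpos
    obtain ⟨w₀, hw₀⟩ := hcpos
    have hsr : ∑ v, Function.update r v₀ (r v₀ - 1) v = n := by
      rw [Finset.sum_update_of_mem (mem_univ v₀), Finset.sdiff_singleton_eq_erase]
      have h2 := Finset.add_sum_erase univ r (mem_univ v₀)
      omega
    have hsc : ∑ w, Function.update c w₀ (c w₀ - 1) w = n := by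
      rw [Finset.sum_update_of_mem (mem_univ w₀), Finset.sdiff_singleton_eq_erase]
      have h2 := Finset.add_sum_erase univ c (mem_univ w₀)
      omega
    obtain ⟨M, hM1, hM2⟩ := ih _ _ hsr hsc
    refine ⟨fun v w => M v w + (if v = v₀ ∧ w = w₀ then 1 else 0), fun v => ?_, fun w => ?_⟩
    · rw [Finset.sum_add_distrib, hM1]
      by_cases hv : v = v₀
      · subst hv
        simp only [true_and]
        rw [Finset.sum_ite_eq' univ w₀ (fun _ => 1)]
        simp only [mem_univ, if_true, Function.update_self]
        omega
      · simp [Function.update_of_ne hv, hv]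
    · rw [Finset.sum_add_distrib, hM2]
      by_cases hw : w = w₀
      · subst hw
        simp only [and_true]
        rw [Finset.sum_ite_eq' univ v₀ (fun _ => 1)]
        simp only [mem_univ, if_true, Function.update_self]
        omega
      · simp [Function.update_of_ne hw, hw]

lemma hallPerm {V : Type*} [Fintype V] [DecidableEq V] (k : ℕ) (hk : 0 < k) (m : V → V → ℕ)
    (hrow : ∀ v, ∑ w, m v w = k) (hcol : ∀ w, ∑ v, m v w = k) :
    ∃ π : V → V, Function.Bijective π ∧ ∀ v, 0 < m v (π v) := by
  classical
  set t : V → Finset V := fun v => univ.filter (fun w => 0 < m v w) with ht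
  have hall : ∀ s : Finset V, s.card ≤ (s.biUnion t).card := by
    intro s
    have key : k * s.card ≤ k * (s.biUnion t).card := by
      calc k * s.card = ∑ v ∈ s, ∑ w, m v w := by
            rw [Finset.sum_congr rfl fun v _ => hrow v, Finset.sum_const, smul_eq_mul, mul_comm]
        _ = ∑ v ∈ s, ∑ w ∈ s.biUnion t, m v w := by
            refine Finset.sum_congr rfl fun v hv => ?_
            refine (Finset.sum_subset (Finset.subset_univ _) fun w _ hw => ?_).symm
            by_contra hpos
            exact hw (Finset.mem_biUnion.mpr ⟨v, hv, by simp [ht, Nat.pos_of_ne_zero, hpos]⟩)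
        _ = ∑ w ∈ s.biUnion t, ∑ v ∈ s, m v w := Finset.sum_comm
        _ ≤ ∑ w ∈ s.biUnion t, k := by
            refine Finset.sum_le_sum fun w _ => ?_
            rw [← hcol w]
            exact Finset.sum_le_sum_of_subset (Finset.subset_univ s)
        _ = k * (s.biUnion t).card := by rw [Finset.sum_const, smul_eq_mul, mul_comm]
    exact Nat.le_of_mul_le_mul_left key hk
  obtain ⟨f, hinj, hf⟩ := (Finset.all_card_le_biUnion_card_iff_exists_injective t).mp hall
  refine ⟨f, (Finite.injective_iff_bijective).mp hinj, fun v => ?_⟩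
  have := hf v
  simp only [ht, Finset.mem_filter] at this
  exact this.2

lemma ncard_filter_eq {V : Type*} [Fintype V] (p : V → Prop) [DecidablePred p] :
    {w | p w}.ncard = (univ.filter p).card := by
  rw [Set.ncard_eq_toFinset_card']
  simp [Set.toFinset_setOf]

lemma decompose {V : Type*} [Fintype V] :
    ∀ (k : ℕ) (D : V → V → Prop),
    (∀ v, {w | D v w}.ncard ≤ k) → (∀ v, {w | D w v}.ncard ≤ k) →
    ∃ col : V → V → ℕ, (∀ v w, D v w → col v w < k) ∧
      (∀ v w₁ w₂, D v w₁ → D v w₂ → w₁ ≠ w₂ → col v w₁ ≠ col v w₂) ∧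
      (∀ v₁ v₂ w, D v₁ w → D v₂ w → v₁ ≠ v₂ → col v₁ w ≠ col v₂ w) := by
  classical
  intro k
  induction k with
  | zero =>
    intro D hout _
    have hD : ∀ v w, ¬ D v w := by
      intro v w hvw
      have h1 : 0 < ({w | D v w} : Set V).ncard := (Set.ncard_pos (Set.toFinite _)).mpr ⟨w, hvw⟩
      have h2 := hout v
      omega
    exact ⟨fun _ _ => 0, fun v w h => absurd h (hD v w),
      fun v w₁ w₂ h _ _ => absurd h (hD v w₁),
      fun v₁ v₂ w h _ _ => absurd h (hD v₁ w)⟩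
  | succ k ih =>
    intro D hout hin
    set out : V → ℕ := fun v => (univ.filter (fun w => D v w)).card with hdefout
    set inn : V → ℕ := fun w => (univ.filter (fun v => D v w)).card with hdefin
    have houtc : ∀ v, {w | D v w}.ncard = out v := fun v => ncard_filter_eq _
    have hinc : ∀ w, {v | D v w}.ncard = inn w := fun w => ncard_filter_eq _
    have hout' : ∀ v, out v ≤ k + 1 := fun v => (houtc v) ▸ hout v
    have hin' : ∀ w, inn w ≤ k + 1 := fun w => (hinc w) ▸ hin w
    -- total double count
    have hsum : ∑ v, out v = ∑ w, inn w := by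
      simp only [hdefout, hdefin, Finset.card_filter]
      exact Finset.sum_comm
    -- fill to regular
    have hrsum : ∑ v, (k + 1 - out v) + ∑ v, out v = (k+1) * Fintype.card V := by
      rw [← Finset.sum_add_distrib]
      rw [Finset.sum_congr rfl fun v _ => Nat.sub_add_cancel (hout' v)]
      simp [Finset.sum_const, mul_comm]
    have hcsum : ∑ w, (k + 1 - inn w) + ∑ w, inn w = (k+1) * Fintype.card V := by
      rw [← Finset.sum_add_distrib]
      rw [Finset.sum_congr rfl fun w _ => Nat.sub_add_cancel (hin' w)]
      simp [Finset.sum_const, mul_comm]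
    obtain ⟨extra, hex1, hex2⟩ := matrixFill (∑ v, (k + 1 - out v))
      (fun v => k + 1 - out v) (fun w => k + 1 - inn w) rfl
      (by show (∑ w, (k + 1 - inn w)) = ∑ v, (k + 1 - out v); omega)
    set m : V → V → ℕ := fun v w => (if D v w then 1 else 0) + extra v w with hm
    have hrow : ∀ v, ∑ w, m v w = k + 1 := by
      intro v
      rw [hm]
      simp only
      rw [Finset.sum_add_distrib, hex1, ← Finset.card_filter]
      have := hout' v
      simp only [hdefout] at *
      omega
    have hcol : ∀ w, ∑ v, m v w = k + 1 := by
      intro w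
      rw [hm]
      simp only
      rw [Finset.sum_add_distrib, hex2, ← Finset.card_filter]
      have := hin' w
      simp only [hdefin] at *
      omega
    obtain ⟨π, hbij, hπ⟩ := hallPerm (k+1) (Nat.succ_pos k) m hrow hcol
    set D' : V → V → Prop := fun v w => D v w ∧ w ≠ π v with hD'
    have hout'' : ∀ v, {w | D' v w}.ncard ≤ k := by
      intro v
      by_cases hfull : out v = k + 1
      · -- extra row is zero, so arc v → π v exists
        have hz : ∀ w, extra v w = 0 := by
          have h0 : ∑ w, extra v w = 0 := by rw [hex1]; omega
          intro w
          exact (Finset.sum_eq_zero_iff.mp h0) w (mem_univ w)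
        have hDvπ : D v (π v) := by
          have := hπ v
          rw [hm] at this
          simp only [hz] at this
          by_contra hc
          simp [hc] at this
        have hseq : {w | D' v w} = {w | D v w} \ {π v} := by
          ext w
          simp [hD', Set.mem_diff]
        have hmem : π v ∈ {w | D v w} := hDvπ
        rw [hseq, Set.ncard_diff_singleton_of_mem hmem, houtc v]
        omega
      · calc ({w | D' v w}).ncard ≤ ({w | D v w}).ncard :=
              Set.ncard_le_ncard (fun w hw => hw.1) (Set.toFinite _)
          _ ≤ k := by rw [houtc v]; have := hout' v; omega
    have hin'' : ∀ w, {v | D' v w}.ncard ≤ k := by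
      intro w
      by_cases hfull : inn w = k + 1
      · have hz : ∀ v, extra v w = 0 := by
          have h0 : ∑ v, extra v w = 0 := by rw [hex2]; omega
          intro v
          exact (Finset.sum_eq_zero_iff.mp h0) v (mem_univ v)
        obtain ⟨v₁, hv₁⟩ := hbij.2 w
        have hDv₁ : D v₁ w := by
          have := hπ v₁
          rw [hm, hv₁] at this
          simp only [hz] at this
          by_contra hc
          simp [hc] at this
        have hsub : {v | D' v w} ⊆ {v | D v w} \ {v₁} := by
          intro v hv
          refine ⟨hv.1, ?_⟩
          simp only [Set.mem_singleton_iff]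
          intro he
          exact hv.2 (by rw [he, hv₁])
        calc ({v | D' v w}).ncard ≤ (({v | D v w} : Set V) \ {v₁}).ncard :=
              Set.ncard_le_ncard hsub (Set.toFinite _)
          _ = ({v | D v w} : Set V).ncard - 1 :=
              Set.ncard_diff_singleton_of_mem (show v₁ ∈ {v | D v w} from hDv₁)
          _ ≤ k := by rw [hinc w]; omega
      · calc ({v | D' v w}).ncard ≤ ({v | D v w}).ncard :=
              Set.ncard_le_ncard (fun v hv => hv.1) (Set.toFinite _)
          _ ≤ k := by rw [hinc w]; have := hin' w; omega
    obtain ⟨col', hc1, hc2, hc3⟩ := ih D' hout'' hin''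
    refine ⟨fun v w => if w = π v then k else col' v w, ?_, ?_, ?_⟩
    · intro v w hvw
      by_cases hw : w = π v
      · simp [hw]
      · have : D' v w := ⟨hvw, hw⟩
        simp only [if_neg hw]
        exact Nat.lt_succ_of_lt (hc1 v w this)
    · intro v w₁ w₂ h1 h2 hne
      by_cases e1 : w₁ = π v <;> by_cases e2 : w₂ = π v
      · exact absurd (e1.trans e2.symm) hne
      · simp only [if_pos e1, if_neg e2]
        exact fun hcon => absurd hcon.symm (Nat.ne_of_lt (hc1 v w₂ ⟨h2, e2⟩))
      · simp only [if_neg e1, if_pos e2]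
        exact Nat.ne_of_lt (hc1 v w₁ ⟨h1, e1⟩)
      · simp only [if_neg e1, if_neg e2]
        exact hc2 v w₁ w₂ ⟨h1, e1⟩ ⟨h2, e2⟩ hne
    · intro v₁ v₂ w h1 h2 hne
      by_cases e1 : w = π v₁ <;> by_cases e2 : w = π v₂
      · exact absurd (hbij.1 (e1.symm.trans e2)) hne
      · simp only [if_pos e1, if_neg e2]
        exact fun hcon => absurd hcon.symm (Nat.ne_of_lt (hc1 v₂ w ⟨h2, e2⟩))
      · simp only [if_neg e1, if_pos e2]
        exact Nat.ne_of_lt (hc1 v₁ w ⟨h1, e1⟩)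
      · simp only [if_neg e1, if_neg e2]
        exact hc3 v₁ v₂ w ⟨h1, e1⟩ ⟨h2, e2⟩ hne


variable {V : Type*}


/-- Orientation with balanced in/out degrees. -/
def OrientB (G : SimpleGraph V) (D : V → V → Prop) : Prop :=
  (∀ u v, G.Adj u v ↔ (D u v ∨ D v u)) ∧ (∀ u v, ¬(D u v ∧ D v u)) ∧
  (∀ v, {w | D v w}.ncard ≤ ((G.neighborSet v).ncard + 1) / 2 ∧
        {w | D w v}.ncard ≤ ((G.neighborSet v).ncard + 1) / 2)

lemma path_first_edge {G : SimpleGraph V} {u v w : V} (p : G.Walk u v)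
    (hp : p.IsPath) (he : s(u, w) ∈ p.edges) : w = p.getVert 1 := by
  cases p with
  | nil => simp at he
  | @cons _ x _ h q =>
    rw [Walk.edges_cons, List.mem_cons] at he
    rcases he with he | he
    · rcases Sym2.eq_iff.mp he with ⟨-, rfl⟩ | ⟨h1, rfl⟩
      · rw [Walk.getVert_cons_succ, Walk.getVert_zero]
      · exact absurd h1 h.ne
    · have hu : u ∈ q.support := Walk.fst_mem_support_of_mem_edges q he
      rw [Walk.cons_isPath_iff] at hp
      exact absurd hu hp.2

lemma maximal_path_endpoint [Fintype V] {G : SimpleGraph V} {u v : V} (p : G.Walk u v)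
    (hp : p.IsPath) (hmax : ∀ (a b : V) (q : G.Walk a b), q.IsPath → q.length ≤ p.length) :
    (∃ (a : V) (c : G.Walk a a), c.IsCycle) ∨ (∀ w, G.Adj u w → w = p.getVert 1) := by
  classical
  by_cases hcyc : ∃ (a : V) (c : G.Walk a a), c.IsCycle
  · exact Or.inl hcyc
  · refine Or.inr fun w hw => ?_
    by_contra hne
    by_cases hws : w ∈ p.support
    · -- build a cycle
      have hq : (p.takeUntil w hws).IsPath := hp.takeUntil hws
      have hedge : s(w, u) ∉ (p.takeUntil w hws).edges := by
        intro hmem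
        have : s(u, w) ∈ p.edges := by
          have := Walk.edges_takeUntil_subset p hws hmem
          rwa [Sym2.eq_swap] at this
        exact hne (path_first_edge p hp this)
      exact hcyc ⟨w, Walk.cons hw.symm (p.takeUntil w hws),
        (Walk.cons_isCycle_iff _ _).mpr ⟨hq, hedge⟩⟩
    · -- extend the path
      have hq : (Walk.cons hw.symm p).IsPath := by
        rw [Walk.cons_isPath_iff]
        exact ⟨hp, hws⟩
      have := hmax _ _ _ hq
      simp only [Walk.length_cons] at this
      omega

lemma exists_cycle_or_path [Fintype V] (G : SimpleGraph V) (hne : G.edgeSet.Nonempty) :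
    (∃ (a : V) (c : G.Walk a a), c.IsCycle) ∨
    (∃ (u v : V) (p : G.Walk u v), p.IsPath ∧ 0 < p.length ∧
      (G.neighborSet u).ncard = 1 ∧ (G.neighborSet v).ncard = 1) := by
  classical
  set S : Set ℕ := {n | ∃ (a b : V) (q : G.Walk a b), q.IsPath ∧ q.length = n} with hS
  have hSne : 1 ∈ S := by
    obtain ⟨e, he⟩ := hne
    induction e with
    | h x y =>
      rw [mem_edgeSet] at he
      exact ⟨x, y, Walk.cons he Walk.nil, by
        constructor
        · rw [Walk.cons_isPath_iff]
          exact ⟨Walk.IsPath.nil, by simp [he.ne]⟩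
        · simp⟩
  have hbdd : BddAbove S := by
    refine ⟨Fintype.card V, fun n hn => ?_⟩
    obtain ⟨a, b, q, hq, rfl⟩ := hn
    exact (hq.length_lt).le
  obtain ⟨u, v, p, hp, hplen⟩ := Nat.sSup_mem ⟨1, hSne⟩ hbdd
  have hmax : ∀ (a b : V) (q : G.Walk a b), q.IsPath → q.length ≤ p.length := by
    intro a b q hq
    rw [hplen]
    exact le_csSup hbdd ⟨a, b, q, hq, rfl⟩
  have hlen : 0 < p.length := by
    rw [hplen]
    exact lt_of_lt_of_le Nat.one_pos (le_csSup hbdd hSne)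
  rcases maximal_path_endpoint p hp hmax with hcyc | hend
  · exact Or.inl hcyc
  · have hmaxr : ∀ (a b : V) (q : G.Walk a b), q.IsPath → q.length ≤ p.reverse.length := by
      intro a b q hq
      rw [Walk.length_reverse]
      exact hmax a b q hq
    rcases maximal_path_endpoint p.reverse hp.reverse hmaxr with hcyc | hend' 
    · exact Or.inl hcyc
    · refine Or.inr ⟨u, v, p, hp, hlen, ?_, ?_⟩
      · have h1 : G.neighborSet u = {p.getVert 1} := by
          ext w
          simp only [mem_neighborSet, Set.mem_singleton_iff]
          constructor
          · exact hend w
          · rintro rfl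
            have := p.adj_getVert_succ (i := 0) hlen
            rwa [Walk.getVert_zero] at this
        rw [h1, Set.ncard_singleton]
      · have h1 : G.neighborSet v = {p.reverse.getVert 1} := by
          ext w
          simp only [mem_neighborSet, Set.mem_singleton_iff]
          constructor
          · exact hend' w
          · rintro rfl
            have := p.reverse.adj_getVert_succ (i := 0) (by rwa [Walk.length_reverse])
            rwa [Walk.getVert_zero] at this
        rw [h1, Set.ncard_singleton]

lemma orient_step [Fintype V] {G : SimpleGraph V} {x y : V} (q : G.Walk x y)
    (hq : q.IsTrail) (hlen : 0 < q.length)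
    (hfst : (q.darts.map (fun d => d.fst)).Nodup)
    (hsnd : (q.darts.map (fun d => d.snd)).Nodup)
    (hbal : ∀ v, ((v ∈ q.darts.map (fun d => d.fst)) ↔ (v ∈ q.darts.map (fun d => d.snd)))
      ∨ (G.neighborSet v).ncard = 1)
    (IH : ∀ (H : SimpleGraph V), H.edgeSet.ncard < G.edgeSet.ncard → ∃ D, OrientB H D) :
    ∃ D, OrientB G D := by
  classical
  set G' := G.deleteEdges {e | e ∈ q.edges} with hG'
  have hG'adj : ∀ v w, G'.Adj v w ↔ G.Adj v w ∧ ¬ s(v, w) ∈ q.edges := by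
    intro v w
    rw [hG', deleteEdges_adj]
    rfl
  have hlt : G'.edgeSet.ncard < G.edgeSet.ncard := by
    refine Set.ncard_lt_ncard ?_ (Set.toFinite _)
    rw [hG', edgeSet_deleteEdges]
    refine ⟨Set.diff_subset, fun hsub => ?_⟩
    have hne : q.edges ≠ [] := by
      intro h0
      have := q.length_edges
      rw [h0] at this
      simp at this
      omega
    obtain ⟨e₀, he₀⟩ := List.exists_mem_of_ne_nil _ hne
    exact (hsub (Walk.edges_subset_edgeSet q he₀)).2 he₀
  obtain ⟨D', hadj', hnd', hcnt'⟩ := IH G' hlt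
  set D₀ : V → V → Prop := fun v w => ∃ d ∈ q.darts, d.toProd = (v, w) with hD₀
  have hqe : q.edges = q.darts.map SimpleGraph.Dart.edge := rfl
  have hedge_iff : ∀ v w, s(v, w) ∈ q.edges ↔ (D₀ v w ∨ D₀ w v) := by
    intro v w
    rw [hqe, List.mem_map]
    constructor
    · rintro ⟨d, hd, hde⟩
      rcases (Sym2.mk_eq_mk_iff (p := d.toProd) (q := (v, w))).mp hde with h | h
      · exact Or.inl ⟨d, hd, h⟩
      · exact Or.inr ⟨d, hd, h⟩
    · rintro (⟨d, hd, hde⟩ | ⟨d, hd, hde⟩)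
      · exact ⟨d, hd, by rw [Dart.edge, hde]⟩
      · exact ⟨d, hd, by rw [Dart.edge, hde]; exact Sym2.eq_swap⟩
  have hD₀adj : ∀ v w, D₀ v w → G.Adj v w := by
    rintro v w ⟨d, hd, hde⟩
    obtain ⟨⟨a, b⟩, hab⟩ := d
    simp only [Prod.mk.injEq] at hde
    obtain ⟨rfl, rfl⟩ := hde
    exact hab
  have hnodupe : (q.darts.map SimpleGraph.Dart.edge).Nodup := by rw [← hqe]; exact hq.edges_nodup
  have hnot₀ : ∀ v w, D₀ v w → ¬ D₀ w v := by
    rintro v w ⟨d₁, hd₁, he₁⟩ ⟨d₂, hd₂, he₂⟩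
    have hvw : v ≠ w := (hD₀adj v w ⟨d₁, hd₁, he₁⟩).ne
    have hedge12 : d₁.edge = d₂.edge := by
      rw [Dart.edge, Dart.edge, he₁, he₂]
      exact Sym2.eq_swap
    have h12 : d₁ = d₂ := List.inj_on_of_nodup_map hnodupe hd₁ hd₂ hedge12
    rw [h12, he₂] at he₁
    simp only [Prod.mk.injEq] at he₁
    exact hvw (he₁.2.symm ▸ he₁.1.symm ▸ rfl)
  have houtsub : ∀ v, ({w | D₀ v w} : Set V).ncard ≤ 1 := by
    intro v
    rw [Set.ncard_le_one (Set.toFinite _)]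
    rintro w₁ ⟨d₁, hd₁, he₁⟩ w₂ ⟨d₂, hd₂, he₂⟩
    have h12 : d₁ = d₂ := List.inj_on_of_nodup_map hfst hd₁ hd₂
      (by rw [show d₁.fst = v from congrArg Prod.fst he₁,
              show d₂.fst = v from congrArg Prod.fst he₂])
    rw [h12, he₂] at he₁
    exact (Prod.mk.injEq _ _ _ _ ▸ he₁).2.symm ▸ rfl
  have hinsub : ∀ v, ({w | D₀ w v} : Set V).ncard ≤ 1 := by
    intro v
    rw [Set.ncard_le_one (Set.toFinite _)]
    rintro w₁ ⟨d₁, hd₁, he₁⟩ w₂ ⟨d₂, hd₂, he₂⟩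
    have h12 : d₁ = d₂ := List.inj_on_of_nodup_map hsnd hd₁ hd₂
      (by rw [show d₁.snd = v from congrArg Prod.snd he₁,
              show d₂.snd = v from congrArg Prod.snd he₂])
    rw [h12, he₂] at he₁
    exact (Prod.mk.injEq _ _ _ _ ▸ he₁).1.symm ▸ rfl
  have houtmem : ∀ v, (v ∈ q.darts.map (fun d => d.fst)) ↔ ({w | D₀ v w} : Set V).Nonempty := by
    intro v
    rw [List.mem_map]
    constructor
    · rintro ⟨d, hd, hdv⟩
      exact ⟨d.snd, d, hd, by rw [← hdv]⟩
    · rintro ⟨w, d, hd, he⟩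
      exact ⟨d, hd, congrArg Prod.fst he⟩
  have hinmem : ∀ v, (v ∈ q.darts.map (fun d => d.snd)) ↔ ({w | D₀ w v} : Set V).Nonempty := by
    intro v
    rw [List.mem_map]
    constructor
    · rintro ⟨d, hd, hdv⟩
      exact ⟨d.fst, d, hd, by rw [← hdv]⟩
    · rintro ⟨w, d, hd, he⟩
      exact ⟨d, hd, congrArg Prod.snd he⟩
  -- neighbor set decomposition
  have hnbhd : ∀ v, G.neighborSet v = (G'.neighborSet v ∪ {w | D₀ v w}) ∪ {w | D₀ w v} := by
    intro v
    ext w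
    simp only [Set.mem_union, mem_neighborSet, Set.mem_setOf_eq]
    constructor
    · intro hvw
      by_cases he : s(v, w) ∈ q.edges
      · rcases (hedge_iff v w).mp he with h | h
        · exact Or.inl (Or.inr h)
        · exact Or.inr h
      · exact Or.inl (Or.inl ((hG'adj v w).mpr ⟨hvw, he⟩))
    · rintro ((h | h) | h)
      · exact ((hG'adj v w).mp h).1
      · exact hD₀adj v w h
      · exact (hD₀adj w v h).symm
  have hdisjA : ∀ v, Disjoint (G'.neighborSet v) ({w | D₀ v w} : Set V) := by
    intro v
    rw [Set.disjoint_left]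
    intro w hw hw0
    exact ((hG'adj v w).mp hw).2 ((hedge_iff v w).mpr (Or.inl hw0))
  have hdisjB : ∀ v, Disjoint (G'.neighborSet v ∪ {w | D₀ v w} : Set V) ({w | D₀ w v} : Set V) := by
    intro v
    rw [Set.disjoint_left]
    rintro w (hw | hw) hw0
    · exact ((hG'adj v w).mp hw).2 ((hedge_iff v w).mpr (Or.inr hw0))
    · exact hnot₀ v w hw hw0
  have hdeg : ∀ v, (G.neighborSet v).ncard =
      (G'.neighborSet v).ncard + ({w | D₀ v w} : Set V).ncard + ({w | D₀ w v} : Set V).ncard := by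
    intro v
    rw [hnbhd v, Set.ncard_union_eq (hdisjB v) (Set.toFinite _) (Set.toFinite _),
      Set.ncard_union_eq (hdisjA v) (Set.toFinite _) (Set.toFinite _)]
  -- the orientation
  refine ⟨fun v w => D₀ v w ∨ D' v w, ?_, ?_, ?_⟩
  · intro v w
    constructor
    · intro hvw
      by_cases he : s(v, w) ∈ q.edges
      · rcases (hedge_iff v w).mp he with h | h
        · exact Or.inl (Or.inl h)
        · exact Or.inr (Or.inl h)
      · rcases (hadj' v w).mp ((hG'adj v w).mpr ⟨hvw, he⟩) with h | h
        · exact Or.inl (Or.inr h)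
        · exact Or.inr (Or.inr h)
    · rintro ((h | h) | (h | h))
      · exact hD₀adj v w h
      · exact ((hG'adj v w).mp ((hadj' v w).mpr (Or.inl h))).1
      · exact (hD₀adj w v h).symm
      · exact ((hG'adj w v).mp ((hadj' w v).mpr (Or.inl h))).1.symm
  · rintro v w ⟨(h1 | h1), (h2 | h2)⟩
    · exact hnot₀ v w h1 h2
    · exact ((hG'adj w v).mp ((hadj' w v).mpr (Or.inl h2))).2 ((hedge_iff w v).mpr (Or.inr h1))
    · exact ((hG'adj v w).mp ((hadj' v w).mpr (Or.inl h1))).2 ((hedge_iff v w).mpr (Or.inr h2))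
    · exact hnd' v w ⟨h1, h2⟩
  · intro v
    have hsplit1 : {w | D₀ v w ∨ D' v w} = ({w | D₀ v w} : Set V) ∪ {w | D' v w} := rfl
    have hsplit2 : {w | D₀ w v ∨ D' w v} = ({w | D₀ w v} : Set V) ∪ {w | D' w v} := rfl
    have hdisj1 : Disjoint ({w | D₀ v w} : Set V) ({w | D' v w} : Set V) := by
      rw [Set.disjoint_left]
      intro w hw hw'
      exact ((hG'adj v w).mp ((hadj' v w).mpr (Or.inl hw'))).2 ((hedge_iff v w).mpr (Or.inl hw))
    have hdisj2 : Disjoint ({w | D₀ w v} : Set V) ({w | D' w v} : Set V) := by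
      rw [Set.disjoint_left]
      intro w hw hw'
      exact ((hG'adj w v).mp ((hadj' w v).mpr (Or.inl hw'))).2 ((hedge_iff w v).mpr (Or.inl hw))
    have hc1 : ({w | D₀ v w ∨ D' v w} : Set V).ncard =
        ({w | D₀ v w} : Set V).ncard + ({w | D' v w} : Set V).ncard := by
      rw [hsplit1, Set.ncard_union_eq hdisj1 (Set.toFinite _) (Set.toFinite _)]
    have hc2 : ({w | D₀ w v ∨ D' w v} : Set V).ncard =
        ({w | D₀ w v} : Set V).ncard + ({w | D' w v} : Set V).ncard := by
      rw [hsplit2, Set.ncard_union_eq hdisj2 (Set.toFinite _) (Set.toFinite _)]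
    have hab : ({w | D₀ v w} : Set V).ncard = ({w | D₀ w v} : Set V).ncard ∨
        (G.neighborSet v).ncard = 1 := by
      rcases hbal v with hiff | hdeg1
      · left
        rw [houtmem, hinmem] at hiff
        by_cases hne : ({w | D₀ v w} : Set V).Nonempty
        · have h1 : 0 < ({w | D₀ v w} : Set V).ncard := (Set.ncard_pos (Set.toFinite _)).mpr hne
          have h2 : 0 < ({w | D₀ w v} : Set V).ncard :=
            (Set.ncard_pos (Set.toFinite _)).mpr (hiff.mp hne)
          have := houtsub v
          have := hinsub v
          omega
        · have h1 : ({w | D₀ v w} : Set V) = ∅ := Set.not_nonempty_iff_eq_empty.mp hne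
          have h2 : ({w | D₀ w v} : Set V) = ∅ := Set.not_nonempty_iff_eq_empty.mp
            (fun hx => hne (hiff.mpr hx))
          rw [h1, h2]
      · right; exact hdeg1
    have hout' := (hcnt' v).1
    have hin' := (hcnt' v).2
    rw [Nat.le_div_iff_mul_le Nat.zero_lt_two] at hout' hin'
    constructor
    · rw [Nat.le_div_iff_mul_le Nat.zero_lt_two, hc1]
      have := hdeg v
      have := houtsub v
      have := hinsub v
      omega
    · rw [Nat.le_div_iff_mul_le Nat.zero_lt_two, hc2]
      have := hdeg v
      have := houtsub v
      have := hinsub v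
      omega

lemma exists_orientation_aux [Fintype V] :
    ∀ (n : ℕ) (G : SimpleGraph V), G.edgeSet.ncard = n → ∃ D, OrientB G D := by
  intro n
  induction n using Nat.strong_induction_on with
  | _ n IH =>
    intro G hn
    classical
    by_cases hne : G.edgeSet.Nonempty
    · have IH' : ∀ (H : SimpleGraph V), H.edgeSet.ncard < G.edgeSet.ncard → ∃ D, OrientB H D :=
        fun H hH => IH _ (hn ▸ hH) H rfl
      rcases exists_cycle_or_path G hne with ⟨a, c, hc⟩ | ⟨u, v, p, hp, hplen, hdu, hdv⟩
      · -- cycle case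
        have htrail : c.IsTrail := hc.isCircuit.isTrail
        have hlen : 0 < c.length := by have := hc.three_le_length; omega
        set t := c.support.tail with hts
        have hsupp : c.support = a :: t := c.support_eq_cons
        have htne : t ≠ [] := by
          have h2 : t.length = c.length := by
            rw [hts, List.length_tail, c.length_support]
            omega
          exact List.length_pos_iff.mp (h2 ▸ hlen)
        have hdec : c.support = c.support.dropLast ++ [a] := by
          conv_lhs => rw [← List.dropLast_append_getLast (c.support_ne_nil)]
          rw [c.getLast_support]
        have hkey : a :: t = c.support.dropLast ++ [a] := by rw [← hsupp, ← hdec]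
        have htnodup : t.Nodup := hc.support_nodup
        obtain ⟨dl', hdl', ht'⟩ : ∃ dl', c.support.dropLast = a :: dl' ∧ t = dl' ++ [a] := by
          cases hdl : c.support.dropLast with
          | nil =>
            rw [hdl] at hkey
            simp at hkey
            exact absurd hkey htne
          | cons a' dl' =>
            rw [hdl, List.cons_append] at hkey
            injection hkey with h1 h2
            exact ⟨dl', by rw [h1], h2⟩
        have hnodup' : dl'.Nodup ∧ a ∉ dl' := by
          rw [ht'] at htnodup
          rcases List.nodup_append'.mp htnodup with ⟨h1, -, hdisj⟩
          exact ⟨h1, fun ha => hdisj ha (by simp)⟩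
        refine orient_step c htrail hlen ?_ ?_ ?_ IH'
        · rw [Walk.map_fst_darts, hdl']
          exact List.nodup_cons.mpr ⟨hnodup'.2, hnodup'.1⟩
        · rw [Walk.map_snd_darts, ← hts]
          exact htnodup
        · intro w
          left
          rw [Walk.map_fst_darts, Walk.map_snd_darts, hdl', ← hts, ht']
          simp only [List.mem_cons, List.mem_append, List.mem_singleton]
          tauto
      · -- path case
        have htrail : p.IsTrail := hp.isTrail
        refine orient_step p htrail hplen ?_ ?_ ?_ IH'
        · rw [Walk.map_fst_darts]
          exact hp.support_nodup.sublist (List.dropLast_sublist _)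
        · rw [Walk.map_snd_darts]
          exact hp.support_nodup.sublist (List.tail_sublist _)
        · intro w
          by_cases hwu : w = u
          · right; rw [hwu]; exact hdu
          by_cases hwv : w = v
          · right; rw [hwv]; exact hdv
          left
          rw [Walk.map_fst_darts, Walk.map_snd_darts]
          constructor
          · intro hmem
            have : w ∈ p.support := List.dropLast_subset _ hmem
            rw [p.support_eq_cons] at this
            rcases List.mem_cons.mp this with h | h
            · exact absurd h hwu
            · exact h
          · intro hmem
            have hw : w ∈ p.support := by
              rw [p.support_eq_cons]
              exact List.mem_cons_of_mem _ hmem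
            have hdec : p.support = p.support.dropLast ++ [v] := by
              conv_lhs => rw [← List.dropLast_append_getLast (p.support_ne_nil)]
              rw [p.getLast_support]
            rw [hdec] at hw
            rcases List.mem_append.mp hw with h | h
            · exact h
            · exact absurd (List.mem_singleton.mp h) hwv
    · -- no edges
      refine ⟨fun _ _ => False, fun u v => ?_, fun u v h => h.1, fun v => ?_⟩
      · simp only [or_self, iff_false]
        intro hadj
        exact hne ⟨s(u, v), (G.mem_edgeSet).mpr hadj⟩
      · simp

lemma exists_orientation [Fintype V] (G : SimpleGraph V) : ∃ D, OrientB G D :=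
  exists_orientation_aux _ G rfl

lemma deg_eq_degree [Fintype V] (G : SimpleGraph V) [DecidableRel G.Adj] (v : V) :
    (G.neighborSet v).ncard = G.degree v := by
  rw [← card_neighborSet_eq_degree, ← Nat.card_coe_set_eq, Nat.card_eq_fintype_card]

lemma maxDeg_le' [Fintype V] {G : SimpleGraph V} {n : ℕ}
    (h : ∀ v, (G.neighborSet v).ncard ≤ n) :
    @SimpleGraph.maxDegree V G _ (Classical.decRel _) ≤ n := by
  letI : DecidableRel G.Adj := Classical.decRel _
  refine G.maxDegree_le_of_forall_degree_le n fun v => ?_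
  rw [← deg_eq_degree G v]
  exact h v

lemma le_maxDeg' [Fintype V] (G : SimpleGraph V) (v : V) :
    (G.neighborSet v).ncard ≤ @SimpleGraph.maxDegree V G _ (Classical.decRel _) := by
  letI : DecidableRel G.Adj := Classical.decRel _
  rw [deg_eq_degree G v]
  exact G.degree_le_maxDegree v



lemma chrom_lower [Fintype V] (G : SimpleGraph V) (σ : Sym2 V → ℤ) (n : ℕ)
    (h : Signed.Colorable G σ n) : Signed.maxDeg G ≤ n := by
  classical
  obtain ⟨f, hmem, -, hinj⟩ := h
  unfold Signed.maxDeg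
  apply maxDeg_le'
  intro v
  set T : Finset ℤ := if Even n then (Finset.Icc (-(n/2 : ℕ) : ℤ) (n/2 : ℕ)).erase 0
    else Finset.Icc (-(n/2 : ℕ) : ℤ) (n/2 : ℕ) with hT
  have hIcc : (Finset.Icc (-(n/2 : ℕ) : ℤ) (n/2 : ℕ)).card = 2*(n/2)+1 := by
    rw [Int.card_Icc]
    omega
  have hTcard : T.card ≤ n := by
    rw [hT]
    by_cases he : Even n
    · rw [if_pos he]
      have h0 : (0:ℤ) ∈ Finset.Icc (-(n/2 : ℕ) : ℤ) (n/2 : ℕ) := by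
        rw [Finset.mem_Icc]
        omega
      rw [Finset.card_erase_of_mem h0, hIcc]
      obtain ⟨m, hm⟩ := he
      omega
    · rw [if_neg he, hIcc]
      have hodd : n % 2 = 1 := Nat.odd_iff.mp (Nat.not_even_iff_odd.mp he)
      omega
  have hmapsto : ∀ w ∈ (G.neighborSet v).toFinset, f v s(v, w) ∈ T := by
    intro w hw
    rw [Set.mem_toFinset] at hw
    obtain ⟨h1, h2⟩ := hmem v w hw
    rw [hT]
    have habs : |f v s(v,w)| ≤ ((n/2 : ℕ) : ℤ) := by
      rw [Int.abs_eq_natAbs]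
      exact_mod_cast (by omega : (f v s(v,w)).natAbs ≤ n/2)
    have hIccmem : f v s(v,w) ∈ Finset.Icc (-(n/2 : ℕ) : ℤ) (n/2 : ℕ) := by
      rw [Finset.mem_Icc]
      exact abs_le.mp habs
    by_cases he : Even n
    · rw [if_pos he]
      exact Finset.mem_erase.mpr ⟨h2 he, hIccmem⟩
    · rw [if_neg he]
      exact hIccmem
  have hinjOn : Set.InjOn (fun w => f v s(v, w)) ((G.neighborSet v).toFinset : Set V) := by
    intro w₁ hw₁ w₂ hw₂ heq
    by_contra hne
    rw [Finset.mem_coe, Set.mem_toFinset] at hw₁ hw₂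
    exact hinj v w₁ w₂ hw₁ hw₂ hne heq
  calc (G.neighborSet v).ncard = (G.neighborSet v).toFinset.card :=
        Set.ncard_eq_toFinset_card' _
    _ ≤ T.card := Finset.card_le_card_of_injOn _ hmapsto hinjOn
    _ ≤ n := hTcard

lemma colorable_even [Fintype V] (G : SimpleGraph V) (k : ℕ)
    (hdeg : ∀ v, (G.neighborSet v).ncard ≤ 2 * k) :
    Signed.Colorable G (fun _ => (1:ℤ)) (2 * k) := by
  classical
  obtain ⟨D, hadj, hnd, hcnt⟩ := exists_orientation G
  have hDadj : ∀ u v, D u v → G.Adj u v := fun u v hD => (hadj u v).mpr (Or.inl hD)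
  have hout : ∀ v, {w | D v w}.ncard ≤ k := by
    intro v
    have h1 := (hcnt v).1
    have h2 := hdeg v
    omega
  have hin : ∀ v, {w | D w v}.ncard ≤ k := by
    intro v
    have h1 := (hcnt v).2
    have h2 := hdeg v
    omega
  obtain ⟨col, hlt, hco, hci⟩ := decompose k D hout hin
  set f : V → Sym2 V → ℤ := fun v e =>
    if hx : ∃ w, w ≠ v ∧ e = s(v, w) ∧ D v w then ((col v hx.choose : ℕ) : ℤ) + 1
    else if hx' : ∃ w, w ≠ v ∧ e = s(v, w) ∧ D w v then -(((col hx'.choose v : ℕ) : ℤ) + 1)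
    else 0 with hf
  have huniq : ∀ (u v w : V), v ≠ u → w ≠ u → s(u,v) = s(u,w) → v = w := by
    intro u v w hv hw he
    rcases Sym2.eq_iff.mp he with ⟨-, h1⟩ | ⟨h1, -⟩
    · exact h1
    · exact absurd h1.symm hw
  have hfpos : ∀ u v, D u v → f u s(u, v) = ((col u v : ℕ) : ℤ) + 1 := by
    intro u v hD
    have hex : ∃ w, w ≠ u ∧ s(u,v) = s(u,w) ∧ D u w := ⟨v, (hDadj u v hD).ne', rfl, hD⟩
    rw [hf]
    simp only
    rw [dif_pos hex]
    obtain ⟨hw1, hw2, hw3⟩ := hex.choose_spec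
    rw [huniq u hex.choose v hw1 (hDadj u v hD).ne' hw2.symm]
  have hfneg : ∀ u v, D v u → f u s(u, v) = -(((col v u : ℕ) : ℤ) + 1) := by
    intro u v hD
    have hne : v ≠ u := (hDadj v u hD).ne
    have hnotex : ¬ ∃ w, w ≠ u ∧ s(u,v) = s(u,w) ∧ D u w := by
      rintro ⟨w, hw1, hw2, hw3⟩
      rw [huniq u v w hne hw1 hw2] at hD
      exact hnd u w ⟨hw3, hD⟩
    have hex : ∃ w, w ≠ u ∧ s(u,v) = s(u,w) ∧ D w u := ⟨v, hne, rfl, hD⟩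
    rw [hf]
    simp only
    rw [dif_neg hnotex, dif_pos hex]
    obtain ⟨hw1, hw2, hw3⟩ := hex.choose_spec
    rw [huniq u hex.choose v hw1 hne hw2.symm]
  refine ⟨f, ?_, ?_, ?_⟩
  · intro u v huv
    rcases (hadj u v).mp huv with hD | hD
    · rw [hfpos u v hD]
      have hc := hlt u v hD
      exact ⟨by omega, fun _ => by omega⟩
    · rw [hfneg u v hD]
      have hc := hlt v u hD
      exact ⟨by omega, fun _ => by omega⟩
  · intro u v huv
    show f u s(u,v) = -(1:ℤ) * f v s(u,v)
    have hsw : s(u,v) = s(v,u) := Sym2.eq_swap.symm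
    rcases (hadj u v).mp huv with hD | hD
    · rw [hfpos u v hD, hsw, hfneg v u hD]
      ring
    · rw [hfneg u v hD, hsw, hfpos v u hD]
      ring
  · intro u v w huv huw hvw
    rcases (hadj u v).mp huv with h1 | h1 <;> rcases (hadj u w).mp huw with h2 | h2
    · rw [hfpos u v h1, hfpos u w h2]
      intro hc
      exact hco u v w h1 h2 hvw (by exact_mod_cast add_right_cancel hc)
    · rw [hfpos u v h1, hfneg u w h2]
      intro hc
      omega
    · rw [hfneg u v h1, hfpos u w h2]
      intro hc
      omega
    · rw [hfneg u v h1, hfneg u w h2]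
      intro hc
      exact hci v w u h1 h2 hvw (by exact_mod_cast add_right_cancel (neg_injective hc))

end SignedAux

/-- If `Δ(G)` is even then `G` is not of class `2^±`: the all-positive signature attains
`χ' = Δ(G)`. -/
theorem even_maxDeg_not_class2 {V : Type*} [Fintype V] (G : SimpleGraph V)
    (h : Even (maxDeg G)) :
    chromIndex G (fun _ => (1 : ℤ)) = maxDeg G ∧ ¬ Class2pm G := by
  classical
  have hsig : IsSignature G (fun _ => (1:ℤ)) := fun e _ => Or.inl rfl
  set k := maxDeg G / 2 with hk
  have hmd : maxDeg G = 2 * k := by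
    obtain ⟨m, hm⟩ := h
    omega
  have hupper : Colorable G (fun _ => (1:ℤ)) (maxDeg G) := by
    rw [hmd]
    refine SignedAux.colorable_even G k (fun v => ?_)
    have h1 : (G.neighborSet v).ncard ≤ maxDeg G := SignedAux.le_maxDeg' G v
    omega
  have heq : chromIndex G (fun _ => (1:ℤ)) = maxDeg G := by
    refine le_antisymm (Nat.sInf_le hupper) (le_csInf ⟨_, hupper⟩ ?_)
    intro n hn
    exact SignedAux.chrom_lower G _ n hn
  refine ⟨heq, fun hcl => ?_⟩
  have h2 := hcl (fun _ => (1:ℤ)) hsig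
  omega
end

section
/- If G is a graph with Δ(G) odd and G has a matching M with Δ(G \ M) < Δ(G), then the all-positive signed graph (G, 1) admits a Δ(G)-edge-coloring; hence G is not of class 2^±. -/
open SimpleGraph

open Signed SimpleGraph


namespace SignedAux

attribute [local instance] Classical.propDecidable

variable {V : Type*}

noncomputable def vals (f : V → Sym2 V → ℤ) (S : Finset (Sym2 V)) (u : V) : Finset ℤ :=
  (S.filter fun e => u ∈ e).image (f u)

lemma mem_vals {f : V → Sym2 V → ℤ} {S : Finset (Sym2 V)} {u : V} {c : ℤ} :
    c ∈ vals f S u ↔ ∃ e ∈ S, u ∈ e ∧ f u e = c := by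
  simp only [vals, Finset.mem_image, Finset.mem_filter]
  tauto

def Good (S : Finset (Sym2 V)) (C : Finset ℤ) (f : V → Sym2 V → ℤ) : Prop :=
  (∀ e ∈ S, ¬ e.IsDiag) ∧
  (∀ x y : V, s(x, y) ∈ S → f x s(x, y) ∈ C ∧ f x s(x, y) = - f y s(x, y)) ∧
  (∀ x : V, ∀ e ∈ S, ∀ e' ∈ S, x ∈ e → x ∈ e' → e ≠ e' → f x e ≠ f x e')

lemma Good.mono {S T : Finset (Sym2 V)} {C : Finset ℤ} {f} (h : Good T C f) (hST : S ⊆ T) :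
    Good S C f :=
  ⟨fun e he => h.1 e (hST he), fun x y hxy => h.2.1 x y (hST hxy),
   fun x e he e' he' => h.2.2 x e (hST he) e' (hST he')⟩

lemma Good.memC {S : Finset (Sym2 V)} {C f} (h : Good S C f) {e : Sym2 V} {x : V}
    (he : e ∈ S) (hx : x ∈ e) : f x e ∈ C := by
  induction e with
  | _ x0 y0 =>
    rcases Sym2.mem_iff.1 hx with rfl | rfl
    · exact (h.2.1 x y0 he).1
    · rw [Sym2.eq_swap] at he ⊢
      exact (h.2.1 x x0 he).1

lemma Good.not_mem_vals_erase {S : Finset (Sym2 V)} {C f} (h : Good S C f) {e : Sym2 V} {x : V}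
    (he : e ∈ S) (hx : x ∈ e) : f x e ∉ vals f (S.erase e) x := by
  rw [mem_vals]
  rintro ⟨e', he', hxe', hfe'⟩
  exact h.2.2 x e' (Finset.mem_erase.1 he').2 e he hxe' hx (Finset.ne_of_mem_erase he') hfe'

lemma Good.attach {S : Finset (Sym2 V)} {C : Finset ℤ} {f} (hf : Good S C f) {u v : V}
    (huv : u ≠ v) (he0 : s(u, v) ∉ S) {c : ℤ} (hc : c ∈ C) (hnc : -c ∈ C)
    (hcu : c ∉ vals f S u) (hcv : -c ∉ vals f S v) :
    Good (insert s(u, v) S) C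
      (fun x e => if e = s(u, v) then (if x = u then c else if x = v then -c else f x e)
        else f x e) := by
  refine ⟨?_, ?_, ?_⟩
  · intro e he
    rcases Finset.mem_insert.1 he with rfl | he
    · simpa [Sym2.mk_isDiag_iff] using huv
    · exact hf.1 e he
  · intro x y hxy
    rcases Finset.mem_insert.1 hxy with hxy0 | hxy
    · rcases Sym2.eq_iff.1 hxy0 with ⟨rfl, rfl⟩ | ⟨rfl, rfl⟩
      · refine ⟨?_, ?_⟩ <;> simp [Ne.symm huv, hc]
      · refine ⟨?_, ?_⟩ <;> simp [huv.symm, hnc]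
    · have hne : s(x, y) ≠ s(u, v) := fun h => he0 (h ▸ hxy)
      simp only [if_neg hne]
      exact hf.2.1 x y hxy
  · intro x e he e' he' hxe hxe' hee'
    -- helper for the mixed case
    have mixed : ∀ e2 ∈ S, x ∈ e2 → x ∈ (s(u,v) : Sym2 V) →
        (if x = u then c else if x = v then -c else f x s(u,v)) ≠ f x e2 := by
      intro e2 he2 hxe2 hxuv
      rcases Sym2.mem_iff.1 hxuv with rfl | rfl
      · rw [if_pos rfl]
        intro hcontra
        exact hcu (mem_vals.2 ⟨e2, he2, hxe2, hcontra.symm⟩)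
      · rw [if_neg (Ne.symm huv), if_pos rfl]
        intro hcontra
        exact hcv (mem_vals.2 ⟨e2, he2, hxe2, hcontra.symm⟩)
    rcases Finset.mem_insert.1 he with rfl | he <;> rcases Finset.mem_insert.1 he' with h' | h'
    · exact absurd h' (by rintro rfl; exact hee' rfl)
    · have hne : e' ≠ s(u, v) := fun h => he0 (h ▸ h')
      simp only [if_pos rfl, if_neg hne]
      exact mixed e' h' hxe' hxe
    · rcases h' with rfl
      have hne : e ≠ s(u, v) := fun h => he0 (h ▸ he)
      simp only [if_pos rfl, if_neg hne]
      exact fun h => mixed e he hxe hxe' h.symm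
    · have hne : e ≠ s(u, v) := fun h => he0 (h ▸ he)
      have hne' : e' ≠ s(u, v) := fun h => he0 (h ▸ h')
      simp only [if_neg hne, if_neg hne']
      exact hf.2.2 x e he e' h' hxe hxe' hee'



lemma swap {C : Finset ℤ} (hC0 : (0:ℤ) ∉ C) (hCneg : ∀ c ∈ C, -c ∈ C) :
    ∀ (n : ℕ) (S : Finset (Sym2 V)) (f : V → Sym2 V → ℤ), S.card ≤ n → Good S C f →
    ∀ (v : V) (a b : ℤ), a ∈ C → b ∈ C → b ≠ -a → b ∉ vals f S v →
    ∃ f', Good S C f' ∧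
      (∀ x : V, ∀ e ∈ S, x ∈ e → f' x e = f x e ∨
        (f x e = -a ∧ f' x e = b) ∨ (f x e = a ∧ f' x e = -b) ∨
        (f x e = -b ∧ f' x e = a) ∨ (f x e = b ∧ f' x e = -a)) ∧
      -a ∉ vals f' S v ∧
      (∀ w, a ∈ vals f' S w → a ∈ vals f S w ∨ (w = v ∧ b = a)) ∧
      (∀ w, b ∈ vals f' S w → b ∈ vals f S w ∨ w = v) := by
  intro n
  induction n with
  | zero =>
    intro S f hcard hf v a b ha hb hab hbv
    have hS : S = ∅ := Finset.card_eq_zero.1 (le_antisymm hcard (Nat.zero_le _))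
    subst hS
    exact ⟨f, hf, by simp, by simp [mem_vals], fun w h => Or.inl h, fun w h => Or.inl h⟩
  | succ n ih =>
    intro S f hcard hf v a b ha hb hab hbv
    by_cases hex : ∃ e ∈ S, v ∈ e ∧ f v e = -a
    case neg =>
      refine ⟨f, hf, fun x e _ _ => Or.inl rfl, ?_, fun w h => Or.inl h, fun w h => Or.inl h⟩
      rw [mem_vals]
      rintro ⟨e, he, hve, hfe⟩
      exact hex ⟨e, he, hve, hfe⟩
    case pos =>
      obtain ⟨e1, he1S, hve1, hfve1⟩ := hex
      obtain ⟨v1, hne, rfl⟩ : ∃ v1, v1 ≠ v ∧ s(v, v1) = e1 :=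
        ⟨Sym2.Mem.other hve1, Sym2.other_ne (hf.1 e1 he1S) hve1, Sym2.other_spec hve1⟩
      have hvne : v ≠ v1 := hne.symm
      have hv1mem : v1 ∈ (s(v, v1) : Sym2 V) := Sym2.mem_mk_right v v1
      have hvmem : v ∈ (s(v, v1) : Sym2 V) := Sym2.mem_mk_left v v1
      have hfv1e1 : f v1 s(v, v1) = a := by
        have h2 := (hf.2.1 v v1 he1S).2
        omega
      set S' := S.erase s(v, v1) with hS'
      have hsub : S' ⊆ S := Finset.erase_subset _ _
      have hfS' : Good S' C f := hf.mono hsub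
      have hcard' : S'.card ≤ n := by
        rw [hS', Finset.card_erase_of_mem he1S]; omega
      have hav1 : a ∉ vals f S' v1 := by
        have h := hf.not_mem_vals_erase he1S hv1mem
        rwa [hfv1e1] at h
      have hnav : -a ∉ vals f S' v := by
        have h := hf.not_mem_vals_erase he1S hvmem
        rwa [hfve1] at h
      have hab' : a ≠ -b := fun h => hab (by omega)
      have hbne0 : b ≠ 0 := fun h => hC0 (h ▸ hb)
      have hane0 : a ≠ 0 := fun h => hC0 (h ▸ ha)
      obtain ⟨g, hg, hmove, hg2, hgA, hgB⟩ := ih S' f hcard' hfS' v1 b a hb ha hab' hav1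
      have hbv' : b ∉ vals f S' v := by
        intro h
        obtain ⟨e, he, h1, h2⟩ := mem_vals.1 h
        exact hbv (mem_vals.2 ⟨e, hsub he, h1, h2⟩)
      have hbgv : b ∉ vals g S' v := by
        intro h
        rcases hgA v h with h' | ⟨h', _⟩
        · exact hbv' h'
        · exact hvne h'
      have hagv : -a ∉ vals g S' v := by
        rw [mem_vals]
        rintro ⟨e, he, hve, hfe⟩
        rcases hmove v e he hve with h | ⟨h1, h2⟩ | ⟨h1, h2⟩ | ⟨h1, h2⟩ | ⟨h1, h2⟩
        · exact hnav (mem_vals.2 ⟨e, he, hve, h ▸ hfe⟩)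
        · exact hane0 (by omega)
        · exact hbv' (mem_vals.2 ⟨e, he, hve, h1⟩)
        · exact hab (by omega)
        · exact hbv' (mem_vals.2 ⟨e, he, hve, by omega⟩)
      refine ⟨fun x e => if e = s(v, v1) then (if x = v then b else if x = v1 then -b else g x e)
        else g x e, ?_, ?_, ?_, ?_, ?_⟩
      · have hGood := hg.attach hvne (Finset.notMem_erase _ _) hb (hCneg b hb) hbgv hg2
        rwa [Finset.insert_erase he1S] at hGood
      · intro x e he hx
        by_cases hee1 : e = s(v, v1)
        · subst hee1
          rcases Sym2.mem_iff.1 hx with rfl | rfl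
          · right; left
            exact ⟨hfve1, by simp⟩
          · right; right; left
            refine ⟨hfv1e1, ?_⟩
            simp [hne]
        · have heS' : e ∈ S' := Finset.mem_erase.2 ⟨hee1, he⟩
          simp only [if_neg hee1]
          rcases hmove x e heS' hx with h | ⟨h1, h2⟩ | ⟨h1, h2⟩ | ⟨h1, h2⟩ | ⟨h1, h2⟩
          · exact Or.inl h
          · exact Or.inr (Or.inr (Or.inr (Or.inl ⟨h1, h2⟩)))
          · exact Or.inr (Or.inr (Or.inr (Or.inr ⟨h1, h2⟩)))
          · exact Or.inr (Or.inl ⟨h1, h2⟩)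
          · exact Or.inr (Or.inr (Or.inl ⟨h1, h2⟩))
      · rw [mem_vals]
        rintro ⟨e, he, hve, hfe⟩
        by_cases hee1 : e = s(v, v1)
        · subst hee1
          rw [if_pos rfl, if_pos rfl] at hfe
          exact hab (by omega)
        · have heS' : e ∈ S' := Finset.mem_erase.2 ⟨hee1, he⟩
          rw [if_neg hee1] at hfe
          exact hagv (mem_vals.2 ⟨e, heS', hve, hfe⟩)
      · intro w hw
        obtain ⟨e, he, hwe, hfe⟩ := mem_vals.1 hw
        by_cases hee1 : e = s(v, v1)
        · subst hee1
          rcases Sym2.mem_iff.1 hwe with rfl | rfl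
          · rw [if_pos rfl, if_pos rfl] at hfe
            exact Or.inr ⟨rfl, hfe⟩
          · rw [if_pos rfl, if_neg hne, if_pos rfl] at hfe
            exact absurd (by omega : a = -b) hab'
        · have heS' : e ∈ S' := Finset.mem_erase.2 ⟨hee1, he⟩
          rw [if_neg hee1] at hfe
          rcases hgB w (mem_vals.2 ⟨e, heS', hwe, hfe⟩) with h | h
          · obtain ⟨e2, he2, h1, h2⟩ := mem_vals.1 h
            exact Or.inl (mem_vals.2 ⟨e2, hsub he2, h1, h2⟩)
          · rw [h]
            exact Or.inl (mem_vals.2 ⟨s(v, v1), he1S, hv1mem, hfv1e1⟩)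
      · intro w hw
        obtain ⟨e, he, hwe, hfe⟩ := mem_vals.1 hw
        by_cases hee1 : e = s(v, v1)
        · subst hee1
          rcases Sym2.mem_iff.1 hwe with rfl | rfl
          · exact Or.inr rfl
          · rw [if_pos rfl, if_neg hne, if_pos rfl] at hfe
            exact absurd (by omega : b = 0) hbne0
        · have heS' : e ∈ S' := Finset.mem_erase.2 ⟨hee1, he⟩
          rw [if_neg hee1] at hfe
          rcases hgA w (mem_vals.2 ⟨e, heS', hwe, hfe⟩) with h | ⟨h1, h2⟩
          · obtain ⟨e2, he2, hh1, hh2⟩ := mem_vals.1 h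
            exact Or.inl (mem_vals.2 ⟨e2, hsub he2, hh1, hh2⟩)
          · rw [h1]
            exact Or.inl (mem_vals.2 ⟨s(v, v1), he1S, hv1mem, by omega⟩)

lemma free_color {C : Finset ℤ} {S : Finset (Sym2 V)} {f : V → Sym2 V → ℤ} {u : V}
    (h : (vals f S u).card < C.card) : ∃ c ∈ C, c ∉ vals f S u := by
  by_contra h'
  push_neg at h'
  exact absurd (Finset.card_le_card fun c hc => h' c hc) (by omega)

lemma extend {C : Finset ℤ} (hC0 : (0:ℤ) ∉ C) (hCneg : ∀ c ∈ C, -c ∈ C)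
    {S : Finset (Sym2 V)} {f : V → Sym2 V → ℤ} (hf : Good S C f) {u v : V} (huv : u ≠ v)
    (he0 : s(u, v) ∉ S) (hu : (vals f S u).card < C.card) (hv : (vals f S v).card < C.card) :
    ∃ f', Good (insert s(u, v) S) C f' := by
  obtain ⟨a, haC, hau⟩ := free_color hu
  by_cases hfree : ∃ c ∈ C, c ∉ vals f S u ∧ -c ∉ vals f S v
  · obtain ⟨c, hc, hcu, hcv⟩ := hfree
    exact ⟨_, hf.attach huv he0 hc (hCneg c hc) hcu hcv⟩
  · push_neg at hfree
    obtain ⟨b, hbC, hbv⟩ := free_color hv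
    have hnav : -a ∈ vals f S v := hfree a haC hau
    have hab : b ≠ -a := fun h => hbv (h ▸ hnav)
    obtain ⟨g, hg, hmove, hg2, hgA, hgB⟩ :=
      swap hC0 hCneg S.card S f le_rfl hf v a b haC hbC hab hbv
    have hagu : a ∉ vals g S u := by
      intro h
      rcases hgA u h with h' | ⟨h1, h2⟩
      · exact hau h'
      · exact huv h1
    exact ⟨_, hg.attach huv he0 haC (hCneg a haC) hagu hg2⟩

lemma colorAll [Fintype V] {C : Finset ℤ} (hC0 : (0:ℤ) ∉ C) (hCneg : ∀ c ∈ C, -c ∈ C)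
    (H : SimpleGraph V)
    (hdeg : ∀ u : V, (H.edgeFinset.filter fun e => u ∈ e).card ≤ C.card) :
    ∃ f, Good H.edgeFinset C f := by
  suffices h : ∀ S ⊆ H.edgeFinset, ∃ f, Good S C f from h _ (subset_refl _)
  intro S
  induction S using Finset.induction_on with
  | empty => exact fun _ => ⟨fun _ _ => 0, by simp [Good], by simp, by simp⟩
  | @insert e0 S he0S ih =>
    revert he0S
    induction e0 using Sym2.ind with
    | _ u v =>
      intro he0S hsub
      obtain ⟨f, hf⟩ := ih (Finset.insert_subset_iff.1 hsub).2
      have he0mem : s(u, v) ∈ H.edgeFinset := (Finset.insert_subset_iff.1 hsub).1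
      have hadj : H.Adj u v := H.mem_edgeSet.1 (SimpleGraph.mem_edgeFinset.1 he0mem)
      have key : ∀ w : V, w ∈ (s(u, v) : Sym2 V) → (vals f S w).card < C.card := by
        intro w hw
        have h1 : (vals f S w).card ≤ (S.filter fun e => w ∈ e).card :=
          Finset.card_image_le
        have h2 : ((insert s(u, v) S).filter fun e => w ∈ e)
            = insert s(u, v) (S.filter fun e => w ∈ e) := by
          rw [Finset.filter_insert, if_pos hw]
        have h3 : s(u, v) ∉ S.filter fun e => w ∈ e :=
          fun h => he0S (Finset.mem_filter.1 h).1
        have h4 : ((insert s(u, v) S).filter fun e => w ∈ e).card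
            ≤ (H.edgeFinset.filter fun e => w ∈ e).card :=
          Finset.card_le_card (Finset.filter_subset_filter _ hsub)
        rw [h2, Finset.card_insert_of_notMem h3] at h4
        have := hdeg w
        omega
      exact extend hC0 hCneg hf hadj.ne he0S
        (key u (Sym2.mem_mk_left u v)) (key v (Sym2.mem_mk_right u v))

end SignedAux

open SignedAux

/-- If `Δ(G)` is odd and some matching `M` satisfies `Δ(G \ M) < Δ(G)`, then the
all-positive signed graph is `Δ(G)`-edge-colorable; hence `G` is not of class `2^±`. -/
theorem not_class2_of_matching {V : Type*} [Fintype V] (G : SimpleGraph V)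
    (hodd : Odd (maxDeg G))
    (hM : ∃ M : Set (Sym2 V), IsMatchingSet G M ∧ maxDeg (G.deleteEdges M) < maxDeg G) :
    Colorable G (fun _ => (1 : ℤ)) (maxDeg G) ∧ ¬ Class2pm G := by
  classical
  obtain ⟨M, hMmatch, hMlt⟩ := hM
  obtain ⟨k, hk⟩ := hodd
  set Δ := maxDeg G with hΔ
  set H := G.deleteEdges M with hH
  set CF : Finset ℤ := (Finset.Icc (-(k:ℤ)) (k:ℤ)).erase 0 with hCF
  have hC0 : (0:ℤ) ∉ CF := Finset.notMem_erase _ _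
  have hmemCF : ∀ c : ℤ, c ∈ CF ↔ (c ≠ 0 ∧ -(k:ℤ) ≤ c ∧ c ≤ k) := by
    intro c
    simp [hCF, Finset.mem_erase, Finset.mem_Icc, and_assoc]
  have hCneg : ∀ c ∈ CF, -c ∈ CF := by
    intro c hc
    rw [hmemCF] at hc ⊢
    omega
  have hCFcard : CF.card = 2 * k := by
    rw [hCF, Finset.card_erase_of_mem (Finset.mem_Icc.2 (by omega)), Int.card_Icc]
    omega
  -- instance-independence of maxDegree
  have hmaxH : ∀ (inst : DecidableRel H.Adj), @SimpleGraph.maxDegree V H _ inst = maxDeg H := by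
    intro inst
    unfold Signed.maxDeg
    congr!
  have hdeg : ∀ u : V, (H.edgeFinset.filter fun e => u ∈ e).card ≤ CF.card := by
    intro u
    have h1 : (H.edgeFinset.filter fun e => u ∈ e).card = H.degree u := by
      rw [← SimpleGraph.incidenceFinset_eq_filter, SimpleGraph.card_incidenceFinset_eq_degree]
    have h2 : H.degree u ≤ H.maxDegree := SimpleGraph.degree_le_maxDegree H u
    rw [hmaxH] at h2
    rw [h1, hCFcard]
    omega
  obtain ⟨f, hf⟩ := colorAll hC0 hCneg H (by convert hdeg)
  replace hf : Good H.edgeFinset CF f := by convert hf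
  set F : V → Sym2 V → ℤ := fun x e => if e ∈ M then 0 else f x e with hF
  have hEdgeH : ∀ u v : V, G.Adj u v → s(u, v) ∉ M → s(u, v) ∈ H.edgeFinset := by
    intro u v huv hm
    rw [SimpleGraph.mem_edgeFinset, SimpleGraph.mem_edgeSet]
    exact SimpleGraph.deleteEdges_adj.2 ⟨huv, hm⟩
  have hcol : IsEdgeColoring G (fun _ => (1:ℤ)) Δ F := by
    refine ⟨?_, ?_, ?_⟩
    · intro u v huv
      by_cases hm : s(u, v) ∈ M
      · simp only [hF, if_pos hm]
        constructor
        · simp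
        · intro hev
          exfalso
          rw [hk] at hev
          rcases hev with ⟨t, ht⟩
          omega
      · simp only [hF, if_neg hm]
        have hmem : f u s(u, v) ∈ CF :=
          hf.memC (hEdgeH u v huv hm) (Sym2.mem_mk_left u v)
        rw [hmemCF] at hmem
        constructor
        · rw [hk]; omega
        · intro _; exact hmem.1
    · intro u v huv
      by_cases hm : s(u, v) ∈ M
      · simp [hF, if_pos hm]
      · simp only [hF, if_neg hm]
        have := (hf.2.1 u v (hEdgeH u v huv hm)).2
        rw [this]; ring
    · intro u v w huv huw hvw
      have hedgene : (s(u, v) : Sym2 V) ≠ s(u, w) := by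
        intro h
        rcases Sym2.eq_iff.1 h with ⟨_, h2⟩ | ⟨h1, _⟩
        · exact hvw h2
        · exact G.irrefl (h1 ▸ huw)
      by_cases hmv : s(u, v) ∈ M <;> by_cases hmw : s(u, w) ∈ M
      · exact absurd (hMmatch.2 _ hmv _ hmw u (Sym2.mem_mk_left u v)
          (Sym2.mem_mk_left u w)) hedgene
      · simp only [hF, if_pos hmv, if_neg hmw]
        have hmem : f u s(u, w) ∈ CF :=
          hf.memC (hEdgeH u w huw hmw) (Sym2.mem_mk_left u w)
        intro h
        exact hC0 (h ▸ hmem)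
      · simp only [hF, if_neg hmv, if_pos hmw]
        have hmem : f u s(u, v) ∈ CF :=
          hf.memC (hEdgeH u v huv hmv) (Sym2.mem_mk_left u v)
        intro h
        exact hC0 (h ▸ hmem)
      · simp only [hF, if_neg hmv, if_neg hmw]
        exact hf.2.2 u _ (hEdgeH u v huv hmv) _ (hEdgeH u w huw hmw)
          (Sym2.mem_mk_left u v) (Sym2.mem_mk_left u w) hedgene
  have hcolorable : Colorable G (fun _ => (1:ℤ)) Δ := ⟨F, hcol⟩
  refine ⟨hcolorable, ?_⟩
  intro hclass
  have h1 : chromIndex G (fun _ => (1:ℤ)) = Δ + 1 :=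
    hclass (fun _ => 1) (fun e _ => Or.inl rfl)
  have h2 : chromIndex G (fun _ => (1:ℤ)) ≤ Δ := Nat.sInf_le hcolorable
  omega
end

section
/- For every integer k ≥ 1 there exists a graph G with Δ(G) = 2k+1 that is of class 2^±, i.e. χ'(G, σ) = 2k+2 for every signature σ. -/
open SimpleGraph

open Signed SimpleGraph



namespace Cls2

/-- number of vertices in one copy -/
def M (k : ℕ) : ℕ := 2 * Nat.factorial (2*k+1) + 1

/-- start of the tail region -/
def T (k : ℕ) : ℕ := (k+1)*(k+2)

lemma M_big (k : ℕ) (hk : 1 ≤ k) : 8*k+5 ≤ M k ∧ T k + 3 ≤ M k ∧ Even (T k) ∧ Odd (M k) := by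
  have h1 : (2*k)*(2*k+1) ≤ Nat.factorial (2*k+1) := by
    calc (2*k)*(2*k+1) ≤ Nat.factorial (2*k) * (2*k+1) := by
          have := Nat.self_le_factorial (2*k); nlinarith [Nat.factorial_pos (2*k)]
      _ = Nat.factorial (2*k+1) := by rw [Nat.factorial_succ]; ring
  have h2 : Even (T k) := by
    have : Even ((k+1)*(k+2)) := Nat.even_mul_succ_self (k+1)
    simpa [T] using this
  refine ⟨?_, ?_, h2, ?_⟩
  · unfold M; nlinarith
  · unfold M T; nlinarith
  · unfold M; exact ⟨Nat.factorial (2*k+1), by ring⟩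

/-- block index of x -/
def bj (x : ℕ) : ℕ := (Nat.sqrt (4*x+1) - 1)/2

lemma bj_spec (x : ℕ) (hx : 2 ≤ x) :
    bj x * (bj x + 1) ≤ x ∧ x ≤ bj x * (bj x + 1) + 2 * bj x + 1 ∧ 1 ≤ bj x := by
  set s := Nat.sqrt (4*x+1) with hs
  have hs1 : s * s ≤ 4*x+1 := by have := Nat.sqrt_le' (4*x+1); nlinarith [this]
  have hs2 : 4*x+1 < (s+1)*(s+1) := by have := Nat.lt_succ_sqrt' (4*x+1); nlinarith [this]
  have hs3 : 3 ≤ s := by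
    have : 3 ≤ Nat.sqrt 9 := by norm_num
    have h9 : (9:ℕ) ≤ 4*x+1 := by omega
    exact le_trans this (Nat.sqrt_le_sqrt h9)
  have hj : bj x = (s-1)/2 := rfl
  set j := (s-1)/2 with hjd
  have hcase : s = 2*j+1 ∨ s = 2*j+2 := by omega
  have key : j*(j+1) ≤ x ∧ x ≤ j*(j+1)+2*j+1 := by
    rcases hcase with h | h
    · constructor <;> nlinarith
    · constructor <;> nlinarith
  have hj1 : 1 ≤ j := by
    by_contra h
    have : j = 0 := by omega
    rw [this] at key; omega
  exact ⟨by rw [hj]; exact key.1, by rw [hj]; exact key.2, by rw [hj]; exact hj1⟩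

lemma bj_eq (j x : ℕ) (h1 : j*(j+1) ≤ x) (h2 : x ≤ j*(j+1)+2*j+1) : bj x = j := by
  have hs1 : (2*j+1) ≤ Nat.sqrt (4*x+1) := by
    rw [Nat.le_sqrt']; nlinarith
  have hs2 : Nat.sqrt (4*x+1) < 2*j+3 := by
    rw [Nat.sqrt_lt']; nlinarith
  unfold bj; omega

/-- the partner function -/
def p (k x : ℕ) : ℕ :=
  if x < T k then
    (if x = bj x * (bj x + 1) then bj x * (bj x +1) + 2 * bj x + 1
     else if x = bj x * (bj x + 1) + 2 * bj x + 1 then bj x * (bj x + 1)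
     else if (x - bj x * (bj x + 1)) % 2 = 1 then x+1 else x-1)
  else (if (x - T k) % 2 = 0 then x+1 else x-1)

lemma blockend_lt_T (k j : ℕ) (hj : j ≤ k) : j*(j+1)+2*j+1 < T k := by
  unfold T; nlinarith

lemma bj_le_k (k x : ℕ) (hx : 2 ≤ x) (hxT : x < T k) : bj x ≤ k := by
  obtain ⟨h1, h2, h3⟩ := bj_spec x hx
  by_contra h
  have : k+1 ≤ bj x := by omega
  have : (k+1)*(k+2) ≤ bj x * (bj x + 1) := by nlinarith
  unfold T at hxT; omega

/-- main structure lemma for p -/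
lemma p_struct (k x : ℕ) (hk : 1 ≤ k) (hx : 2 ≤ x) (hx2 : x ≤ M k - 2) :
    2 ≤ p k x ∧ p k x ≤ M k - 2 ∧ p k (p k x) = x ∧
    (∃ j ≤ k, (p k x = x + (2*j+1) ∨ x = p k x + (2*j+1))) := by
  obtain ⟨hM1, hM2, hTe, hMo⟩ := M_big k hk
  obtain ⟨t, ht⟩ := hTe
  obtain ⟨f, hf⟩ := hMo
  by_cases hxT : x < T k
  · -- block case
    obtain ⟨h1, h2, hj1⟩ := bj_spec x hx
    have hjk : bj x ≤ k := bj_le_k k x hx hxT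
    set j := bj x with hjdef
    set b := j*(j+1) with hbdef
    have hbend : b + 2*j+1 < T k := blockend_lt_T k j hjk
    have hb2 : 2 ≤ b := by
      have : 1*(1+1) ≤ j*(j+1) := Nat.mul_le_mul (by omega) (by omega)
      omega
    -- helper to compute bj of any point in the block
    have hbj : ∀ y, b ≤ y → y ≤ b + 2*j+1 → bj y = j := by
      intro y hy1 hy2
      exact bj_eq j y (by omega) (by omega)
    by_cases he1 : x = b
    · -- lower endpoint
      have hp : p k x = b + 2*j+1 := by
        unfold p; rw [← hjdef, ← hbdef]; split_ifs <;> omega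
      have hbj2 : bj (b+2*j+1) = j := hbj _ (by omega) (by omega)
      have hpp : p k (b+2*j+1) = b := by
        unfold p; rw [hbj2]; split_ifs <;> omega
      refine ⟨by omega, by omega, ?_, ⟨j, hjk, ?_⟩⟩
      · rw [hp, hpp, he1]
      · left; omega
    · by_cases he2 : x = b + 2*j+1
      · have hp : p k x = b := by
          unfold p; rw [if_pos hxT, ← hjdef, ← hbdef, if_neg he1, if_pos (by omega)]
        have hbj2 : bj b = j := hbj _ (by omega) (by omega)
        have hpp : p k b = b + 2*j+1 := by
          unfold p; rw [hbj2]; split_ifs <;> omega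
        refine ⟨by omega, by omega, by rw [hp, hpp, he2], ⟨j, hjk, by right; omega⟩⟩
      · -- interior
        have hint : b + 1 ≤ x ∧ x ≤ b + 2*j := by omega
        by_cases hpar : (x - b) % 2 = 1
        · have hp : p k x = x + 1 := by
            unfold p
            rw [if_pos hxT, ← hjdef, ← hbdef, if_neg he1, if_neg he2, if_pos hpar]
          have hx1b : x + 1 ≤ b + 2*j := by omega
          have hbj2 : bj (x+1) = j := hbj _ (by omega) (by omega)
          have hpp : p k (x+1) = x := by
            unfold p; rw [hbj2]; split_ifs <;> omega
          exact ⟨by omega, by omega, by rw [hp, hpp], ⟨0, by omega, by left; omega⟩⟩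
        · have hp : p k x = x - 1 := by
            unfold p
            rw [if_pos hxT, ← hjdef, ← hbdef, if_neg he1, if_neg he2, if_neg hpar]
          have hxlb : b + 2 ≤ x := by omega
          have hbj2 : bj (x-1) = j := hbj _ (by omega) (by omega)
          have hpp : p k (x-1) = x := by
            unfold p; rw [hbj2]; split_ifs <;> omega
          exact ⟨by omega, by omega, by rw [hp, hpp], ⟨0, by omega, by right; omega⟩⟩
  · -- tail case
    have hxT' : T k ≤ x := by omega
    by_cases hpar : (x - T k) % 2 = 0
    · have hp : p k x = x + 1 := by unfold p; split_ifs <;> omega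
      have hne : x ≠ M k - 2 := by omega
      have hpp : p k (x+1) = x := by
        unfold p; split_ifs <;> omega
      exact ⟨by omega, by omega, by rw [hp, hpp], ⟨0, by omega, by left; omega⟩⟩
    · have hp : p k x = x - 1 := by unfold p; split_ifs <;> omega
      have hxlb : T k + 1 ≤ x := by omega
      have hpp : p k (x-1) = x := by
        unfold p; split_ifs <;> omega
      exact ⟨by omega, by omega, by rw [hp, hpp], ⟨0, by omega, by right; omega⟩⟩

end Cls2
section Chunk2
namespace Cls2

variable (k : ℕ)

instance : NeZero (M k) := ⟨by unfold M; omega⟩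

lemma Mge : 4*k+3 ≤ M k := by
  have := Nat.self_le_factorial (2*k+1); unfold M; omega

abbrev Zm := ZMod (M k)

def dz (j : ℕ) : Zm k := ((2*j+1 : ℕ) : Zm k)

lemma dz_val {j : ℕ} (hj : j ≤ k) : (dz k j).val = 2*j+1 :=
  ZMod.val_cast_of_lt (by have := Mge k; omega)

lemma cast_val (x : Zm k) : ((x.val : ℕ) : Zm k) = x := by
  rw [ZMod.natCast_val, ZMod.cast_id]

/-- removed ("reserved") pairs -/
def Radj (x y : Zm k) : Prop :=
  (x.val = 0 ∧ (y.val = 1 ∨ y.val = M k - 1)) ∨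
  (y.val = 0 ∧ (x.val = 1 ∨ x.val = M k - 1)) ∨
  (2 ≤ x.val ∧ x.val ≤ M k - 2 ∧ y.val = p k x.val) ∨
  (2 ≤ y.val ∧ y.val ≤ M k - 2 ∧ x.val = p k y.val)

/-- adjacency within one copy -/
def Hadj (x y : Zm k) : Prop :=
  (∃ j, j ≤ k ∧ (y = x + dz k j ∨ x = y + dz k j)) ∧ ¬ Radj k x y

lemma Radj_symm {x y : Zm k} (h : Radj k x y) : Radj k y x := by
  unfold Radj at *; tauto

lemma Hadj_symm {x y : Zm k} (h : Hadj k x y) : Hadj k y x := by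
  obtain ⟨⟨j, hj, hd⟩, hr⟩ := h
  exact ⟨⟨j, hj, hd.symm⟩, fun h' => hr (Radj_symm k h')⟩

lemma Hadj_irrefl (x : Zm k) : ¬ Hadj k x x := by
  rintro ⟨⟨j, hj, hd⟩, -⟩
  have h0 : dz k j = 0 := by
    rcases hd with h | h <;> exact (left_eq_add.mp h)
  have h1 := dz_val k hj
  rw [h0, ZMod.val_zero] at h1
  omega

/-- partner element in `ZMod (M k)` -/
def pZ (x : Zm k) : Zm k :=
  if x.val = M k - 1 then 0 else ((p k x.val : ℕ) : Zm k)

lemma p_one : p k 1 = 0 := by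
  have hb : bj 1 = 0 := bj_eq 0 1 (by omega) (by omega)
  have hT : 1 < T k := by unfold T; nlinarith
  unfold p
  rw [hb, if_pos hT]
  norm_num

/-- characterization of Radj for nonzero x -/
lemma Radj_iff (hk : 1 ≤ k) {x : Zm k} (hx : x.val ≠ 0) (y : Zm k) :
    Radj k x y ↔ y = pZ k x := by
  have hM := Mge k
  have hv := ZMod.val_lt x
  have hvy := ZMod.val_lt y
  have hyx : y = pZ k x ↔ (pZ k x).val = y.val :=
    ⟨fun h => by rw [h], fun h => (ZMod.val_injective _ h).symm⟩
  by_cases h1 : x.val = 1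
  · have hp1 : pZ k x = 0 := by
      unfold pZ; rw [h1, if_neg (by omega), p_one]; simp
    rw [hp1]
    constructor
    · rintro (⟨h, _⟩ | ⟨hy0, _⟩ | ⟨h2, _, _⟩ | ⟨h2, h3, h4⟩)
      · omega
      · exact ZMod.val_injective _ (by simpa using hy0)
      · omega
      · exfalso; obtain ⟨hl, hu, _, _⟩ := p_struct k y.val hk h2 h3; omega
    · intro h
      right; left
      constructor
      · rw [h]; exact ZMod.val_zero
      · left; exact h1
  · by_cases h2 : x.val = M k - 1
    · have hp1 : pZ k x = 0 := by unfold pZ; rw [if_pos h2]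
      rw [hp1]
      constructor
      · rintro (⟨h, _⟩ | ⟨hy0, _⟩ | ⟨ha, hb, _⟩ | ⟨ha, hb, hc⟩)
        · omega
        · exact ZMod.val_injective _ (by simpa using hy0)
        · omega
        · exfalso; obtain ⟨hl, hu, _, _⟩ := p_struct k y.val hk ha hb; omega
      · intro h
        right; left
        exact ⟨by rw [h]; exact ZMod.val_zero, Or.inr h2⟩
    · -- generic: 2 ≤ x.val ≤ M - 2
      have hgen : 2 ≤ x.val ∧ x.val ≤ M k - 2 := by omega
      obtain ⟨hl, hu, hinv, j, hj, hdiff⟩ := p_struct k x.val hk hgen.1 hgen.2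
      have hplt : p k x.val < M k := by omega
      have hpz : (pZ k x).val = p k x.val := by
        unfold pZ; rw [if_neg h2, ZMod.val_cast_of_lt hplt]
      constructor
      · rintro (⟨h, _⟩ | ⟨hy0, hy1⟩ | ⟨_, _, h⟩ | ⟨ha, hb, hc⟩)
        · omega
        · omega
        · rw [hyx, hpz, h]
        · rw [hyx, hpz]
          obtain ⟨hl', hu', hinv', _⟩ := p_struct k y.val hk ha hb
          rw [hc, hinv']
      · intro h
        right; right; left
        exact ⟨hgen.1, hgen.2, by rw [← hpz, h]⟩

/-- characterization of Radj for zero -/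
lemma neg_one_val : (-1 : Zm k).val = M k - 1 := by
  have hM := Mge k
  have hm1e : ((M k - 1 : ℕ) : Zm k) = -1 := by
    have h2 : ((M k - 1 : ℕ) : Zm k) + 1 = ((M k : ℕ) : Zm k) := by
      have h3 : ((M k - 1 + 1 : ℕ) : Zm k) = ((M k : ℕ) : Zm k) := by
        norm_cast
      rw [← h3]; push_cast; ring
    rw [ZMod.natCast_self] at h2
    exact eq_neg_of_add_eq_zero_left h2
  rw [← hm1e, ZMod.val_cast_of_lt (by omega)]

lemma Radj0_iff (hk : 1 ≤ k) (y : Zm k) : Radj k 0 y ↔ y = 1 ∨ y = -1 := by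
  have hM := Mge k
  have hvy := ZMod.val_lt y
  have h1 : (1 : Zm k).val = 1 := by
    rw [← Nat.cast_one, ZMod.val_cast_of_lt (by omega)]
  have hm1 : (-1 : Zm k).val = M k - 1 := neg_one_val k
  constructor
  · rintro (⟨h, hy⟩ | ⟨hy0, hx1⟩ | ⟨ha, _, _⟩ | ⟨ha, hb, hc⟩)
    · rcases hy with hy | hy
      · left; exact ZMod.val_injective _ (by rw [h1]; exact hy)
      · right; exact ZMod.val_injective _ (by rw [hm1]; exact hy)
    · simp at hx1; omega
    · simp at ha
    · simp at hc
      obtain ⟨hl, hu, _, _⟩ := p_struct k y.val hk ha hb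
      omega
  · rintro (h | h) <;> subst h
    · left; exact ⟨by simp, Or.inl h1⟩
    · left; exact ⟨by simp, Or.inr hm1⟩

end Cls2
end Chunk2
section Chunk3
namespace Cls2
variable (k : ℕ)

lemma dz_zero : dz k 0 = 1 := by unfold dz; norm_num

lemma one_val : (1 : Zm k).val = 1 := by
  have hM := Mge k
  rw [← Nat.cast_one, ZMod.val_cast_of_lt (by omega)]

lemma pZ_mem (hk : 1 ≤ k) (x : Zm k) (hx : x.val ≠ 0) :
    ∃ j, j ≤ k ∧ (pZ k x = x + dz k j ∨ pZ k x = x - dz k j) := by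
  have hM := Mge k
  have hv := ZMod.val_lt x
  by_cases h1 : x.val = 1
  · have hx1 : x = 1 := ZMod.val_injective _ (by rw [h1, one_val])
    refine ⟨0, by omega, Or.inr ?_⟩
    have : pZ k x = 0 := by unfold pZ; rw [h1, if_neg (by omega), p_one]; simp
    rw [this, hx1, dz_zero]; ring
  · by_cases h2 : x.val = M k - 1
    · have hx1 : x = -1 := ZMod.val_injective _ (by rw [h2, neg_one_val])
      refine ⟨0, by omega, Or.inl ?_⟩
      have : pZ k x = 0 := by unfold pZ; rw [if_pos h2]
      rw [this, hx1, dz_zero]; ring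
    · obtain ⟨hl, hu, hinv, j, hj, hdiff⟩ := p_struct k x.val hk (by omega) (by omega)
      set q := p k x.val with hq
      have hpz : pZ k x = ((q : ℕ) : Zm k) := by unfold pZ; rw [if_neg h2]
      refine ⟨j, hj, ?_⟩
      rcases hdiff with h | h
      · left
        rw [hpz, h]
        conv_rhs => rw [← cast_val k x]
        unfold dz
        push_cast
        ring
      · right
        rw [hpz, eq_sub_iff_add_eq]
        conv_rhs => rw [← cast_val k x]
        rw [h]
        unfold dz
        push_cast
        ring

/-- difference finset -/
def Df : Finset (Zm k) := (Finset.range (k+1)).image (fun j => dz k j)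

def Remf (x : Zm k) : Finset (Zm k) := if x.val = 0 then {1, -1} else {pZ k x}

def nbhd (x : Zm k) : Finset (Zm k) :=
  ((Df k).image (fun d => x + d) ∪ (Df k).image (fun d => x - d)) \ Remf k x

lemma mem_AB (x y : Zm k) :
    y ∈ (Df k).image (fun d => x + d) ∪ (Df k).image (fun d => x - d) ↔
      ∃ j, j ≤ k ∧ (y = x + dz k j ∨ y = x - dz k j) := by
  simp only [Finset.mem_union, Finset.mem_image, Df, Finset.mem_range]
  constructor
  · rintro (⟨d, ⟨j, hj, rfl⟩, rfl⟩ | ⟨d, ⟨j, hj, rfl⟩, rfl⟩)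
    · exact ⟨j, by omega, Or.inl rfl⟩
    · exact ⟨j, by omega, Or.inr rfl⟩
  · rintro ⟨j, hj, rfl | rfl⟩
    · exact Or.inl ⟨dz k j, ⟨j, by omega, rfl⟩, rfl⟩
    · exact Or.inr ⟨dz k j, ⟨j, by omega, rfl⟩, rfl⟩

lemma mem_Remf_iff_Radj (hk : 1 ≤ k) (x y : Zm k) : y ∈ Remf k x ↔ Radj k x y := by
  unfold Remf
  by_cases h0 : x.val = 0
  · have hx0 : x = 0 := ZMod.val_injective _ (by simpa using h0)
    rw [if_pos h0, hx0, Radj0_iff k hk]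
    simp
  · rw [if_neg h0, Radj_iff k hk h0]
    simp

lemma Hadj_iff_mem (hk : 1 ≤ k) (x y : Zm k) : Hadj k x y ↔ y ∈ nbhd k x := by
  unfold Hadj nbhd
  rw [Finset.mem_sdiff, mem_AB, mem_Remf_iff_Radj k hk]
  constructor
  · rintro ⟨⟨j, hj, hd⟩, hr⟩
    refine ⟨⟨j, hj, ?_⟩, hr⟩
    rcases hd with h | h
    · exact Or.inl h
    · exact Or.inr (by rw [h]; ring)
  · rintro ⟨⟨j, hj, hd⟩, hr⟩
    refine ⟨⟨j, hj, ?_⟩, hr⟩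
    rcases hd with h | h
    · exact Or.inl h
    · exact Or.inr (by rw [h]; ring)

lemma card_AB (x : Zm k) :
    ((Df k).image (fun d => x + d) ∪ (Df k).image (fun d => x - d) : Finset (Zm k)).card = 2*k+2 := by
  have hM := Mge k
  have hDf : (Df k).card = k + 1 := by
    rw [Df, Finset.card_image_of_injOn, Finset.card_range]
    intro a ha b hb h
    have ha2 : a < k+1 := by simpa using ha
    have hb2 : b < k+1 := by simpa using hb
    have ha' := dz_val k (by omega : a ≤ k)
    have hb' := dz_val k (by omega : b ≤ k)
    have : (dz k a).val = (dz k b).val := by simp only at h; rw [h]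
    omega
  rw [Finset.card_union_of_disjoint, Finset.card_image_of_injective _ (add_right_injective x),
      Finset.card_image_of_injective _ (sub_right_injective), hDf]
  · ring
  · rw [Finset.disjoint_left]
    rintro a ha hb
    simp only [Finset.mem_image, Df, Finset.mem_range] at ha hb
    obtain ⟨_, ⟨j, hj, rfl⟩, rfl⟩ := ha
    obtain ⟨_, ⟨j', hj', rfl⟩, h⟩ := hb
    have : dz k j + dz k j' = 0 := by
      linear_combination -h
    have hval : (dz k j + dz k j').val = 0 := by rw [this]; simp
    have : dz k j + dz k j' = ((2*j+1 + (2*j'+1) : ℕ) : Zm k) := by unfold dz; push_cast; ring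
    rw [this, ZMod.val_cast_of_lt (by omega)] at hval
    omega

lemma Remf_subset (hk : 1 ≤ k) (x : Zm k) :
    Remf k x ⊆ (Df k).image (fun d => x + d) ∪ (Df k).image (fun d => x - d) := by
  intro y hy
  rw [mem_AB]
  unfold Remf at hy
  by_cases h0 : x.val = 0
  · have hx0 : x = 0 := ZMod.val_injective _ (by simpa using h0)
    rw [if_pos h0] at hy
    simp only [Finset.mem_insert, Finset.mem_singleton] at hy
    rcases hy with rfl | rfl
    · exact ⟨0, by omega, Or.inl (by rw [hx0, dz_zero]; ring)⟩
    · exact ⟨0, by omega, Or.inr (by rw [hx0, dz_zero]; ring)⟩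
  · rw [if_neg h0] at hy
    simp only [Finset.mem_singleton] at hy
    subst hy
    exact pZ_mem k hk x h0

lemma card_nbhd (hk : 1 ≤ k) (x : Zm k) :
    (nbhd k x).card = if x.val = 0 then 2*k else 2*k+1 := by
  have hM := Mge k
  unfold nbhd
  rw [Finset.card_sdiff_of_subset (Remf_subset k hk x), card_AB]
  by_cases h0 : x.val = 0
  · rw [if_pos h0]
    have : (Remf k x).card = 2 := by
      unfold Remf
      rw [if_pos h0]
      rw [Finset.card_insert_of_notMem, Finset.card_singleton]
      simp only [Finset.mem_singleton]
      intro h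
      have h1 := one_val k
      have h2 := neg_one_val k
      rw [h] at h1
      omega
    rw [this]; omega
  · rw [if_neg h0]
    have : (Remf k x).card = 1 := by unfold Remf; rw [if_neg h0]; simp
    rw [this]; omega

end Cls2
end Chunk3
section Chunk4
namespace Cls2
variable (k : ℕ)

abbrev Vt (k : ℕ) : Type := (Bool × Zm k) ⊕ Unit

/-- the graph: two copies of H joined through a central vertex -/
def G (k : ℕ) : SimpleGraph (Vt k) where
  Adj a b := match a, b with
    | Sum.inl (i,x), Sum.inl (i',y) => i = i' ∧ Hadj k x y
    | Sum.inl (_,x), Sum.inr _ => x = 0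
    | Sum.inr _, Sum.inl (_,x) => x = 0
    | Sum.inr _, Sum.inr _ => False
  symm := by
    constructor
    rintro (⟨i,x⟩|⟨⟩) (⟨i',y⟩|⟨⟩) h
    · exact ⟨h.1.symm, Hadj_symm k h.2⟩
    · exact h
    · exact h
    · exact h.elim
  loopless := by
    constructor
    rintro (⟨i,x⟩|⟨⟩) h
    · exact Hadj_irrefl k x h.2
    · exact h

lemma adj_inl_inl {i i' : Bool} {x y : Zm k} :
    (G k).Adj (Sum.inl (i,x)) (Sum.inl (i',y)) ↔ i = i' ∧ Hadj k x y := Iff.rfl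
lemma adj_inl_inr {i : Bool} {x : Zm k} {u : Unit} :
    (G k).Adj (Sum.inl (i,x)) (Sum.inr u) ↔ x = 0 := Iff.rfl
lemma adj_inr_inl {i : Bool} {x : Zm k} {u : Unit} :
    (G k).Adj (Sum.inr u) (Sum.inl (i,x)) ↔ x = 0 := Iff.rfl
lemma adj_inr_inr {u u' : Unit} : ¬ (G k).Adj (Sum.inr u) (Sum.inr u') := fun h => h

lemma nbrFinset_inl [DecidableRel (G k).Adj] (hk : 1 ≤ k) (i : Bool) (x : Zm k) :
    (G k).neighborFinset (Sum.inl (i,x)) =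
      (nbhd k x).image (fun y => (Sum.inl (i,y) : Vt k)) ∪
        (if x = 0 then {Sum.inr ()} else ∅) := by
  ext w
  rw [SimpleGraph.mem_neighborFinset]
  rcases w with ⟨i', y⟩ | ⟨⟩
  · rw [adj_inl_inl]
    simp only [Finset.mem_union, Finset.mem_image]
    constructor
    · rintro ⟨rfl, h⟩
      exact Or.inl ⟨y, (Hadj_iff_mem k hk x y).mp h, rfl⟩
    · rintro (⟨y', hy', heq⟩ | h)
      · have h1 : i = i' ∧ y' = y := by simpa [Prod.ext_iff] using heq
        obtain ⟨rfl, rfl⟩ := h1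
        exact ⟨rfl, (Hadj_iff_mem k hk x _).mpr hy'⟩
      · exfalso
        by_cases h0 : x = 0
        · rw [if_pos h0] at h; simp at h
        · rw [if_neg h0] at h; simp at h
  · rw [adj_inl_inr]
    simp only [Finset.mem_union, Finset.mem_image]
    constructor
    · intro h
      rw [if_pos h]
      exact Or.inr (by simp)
    · rintro (⟨y', _, heq⟩ | h)
      · exact absurd heq (by simp)
      · by_cases h0 : x = 0
        · exact h0
        · rw [if_neg h0] at h; simp at h

lemma degree_inl [DecidableRel (G k).Adj] (hk : 1 ≤ k) (i : Bool) (x : Zm k) :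
    (G k).degree (Sum.inl (i,x)) = 2*k+1 := by
  have hinj : Function.Injective (fun y => (Sum.inl (i,y) : Vt k)) := by
    intro a b hab; simpa using hab
  have hdisj : Disjoint ((nbhd k x).image (fun y => (Sum.inl (i,y) : Vt k)))
      (if x = 0 then ({Sum.inr ()} : Finset (Vt k)) else ∅) := by
    by_cases h0 : x = 0
    · rw [if_pos h0, Finset.disjoint_right]
      intro a ha
      rw [Finset.mem_singleton] at ha
      subst ha
      simp
    · rw [if_neg h0]
      exact Finset.disjoint_empty_right _
  rw [SimpleGraph.degree, nbrFinset_inl k hk i x, Finset.card_union_of_disjoint hdisj,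
      Finset.card_image_of_injective _ hinj, card_nbhd k hk x]
  by_cases h0 : x = 0
  · rw [if_pos (by rw [h0]; simp), if_pos h0, Finset.card_singleton]
  · have hne : x.val ≠ 0 := fun h => h0 (ZMod.val_injective _ (by simpa using h))
    rw [if_neg hne, if_neg h0, Finset.card_empty]

lemma degree_inr [DecidableRel (G k).Adj] :
    (G k).degree (Sum.inr ()) = 2 := by
  have : (G k).neighborFinset (Sum.inr ()) =
      {Sum.inl (false, 0), Sum.inl (true, 0)} := by
    ext w
    rw [SimpleGraph.mem_neighborFinset]
    rcases w with ⟨i', y⟩ | ⟨⟩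
    · rw [adj_inr_inl]
      rcases i' with _ | _ <;> simp [Prod.ext_iff] <;> tauto
    · simp only [Finset.mem_insert, Finset.mem_singleton]
      constructor
      · intro h; exact h.elim
      · rintro (h | h) <;> simp at h
  rw [SimpleGraph.degree, this]
  rw [Finset.card_insert_of_notMem (by simp), Finset.card_singleton]

lemma maxDeg_G (hk : 1 ≤ k) : Signed.maxDeg (G k) = 2*k+1 := by
  unfold Signed.maxDeg
  letI : DecidableRel (G k).Adj := Classical.decRel _
  apply le_antisymm
  · apply SimpleGraph.maxDegree_le_of_forall_degree_le
    rintro (⟨i,x⟩ | ⟨⟩)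
    · rw [degree_inl k hk i x]
    · rw [degree_inr k]; omega
  · have h1 := SimpleGraph.degree_le_maxDegree (G := G k) (Sum.inl (false, (0 : Zm k)))
    rw [degree_inl k hk false 0] at h1
    exact h1

end Cls2
end Chunk4
section Chunk5
namespace Cls2

lemma even_card_of_invol {α : Type*} [DecidableEq α] :
    ∀ (n : ℕ) (s : Finset α) (g : α → α), s.card = n →
    (∀ x ∈ s, g x ∈ s) → (∀ x ∈ s, g (g x) = x) → (∀ x ∈ s, g x ≠ x) → Even n := by
  intro n
  induction n using Nat.strong_induction_on with
  | _ n ih =>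
    intro s g hcard h1 h2 h3
    rcases Finset.eq_empty_or_nonempty s with rfl | ⟨x, hx⟩
    · rw [← hcard]; exact Even.zero
    · have hgx := h1 x hx
      have hne := h3 x hx
      set s' := (s.erase x).erase (g x) with hs'
      have hgmem : g x ∈ s.erase x := Finset.mem_erase.mpr ⟨hne, hgx⟩
      have hcard' : s'.card = n - 2 := by
        rw [hs', Finset.card_erase_of_mem hgmem, Finset.card_erase_of_mem hx, hcard]
        omega
      have hmem' : ∀ y, y ∈ s' ↔ y ∈ s ∧ y ≠ x ∧ y ≠ g x := by
        intro y
        rw [hs', Finset.mem_erase, Finset.mem_erase]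
        tauto
      have hn2 : 2 ≤ n := by
        have : ({x, g x} : Finset α) ⊆ s := by
          intro a ha
          rcases Finset.mem_insert.mp ha with rfl | ha
          · exact hx
          · rw [Finset.mem_singleton] at ha; subst ha; exact hgx
        have := Finset.card_le_card this
        rw [Finset.card_insert_of_notMem (by simpa using hne.symm), Finset.card_singleton] at this
        omega
      have heven := ih (n-2) (by omega) s' g hcard'
        (by
          intro y hy
          rw [hmem'] at hy ⊢
          obtain ⟨hys, hyx, hygx⟩ := hy
          refine ⟨h1 y hys, ?_, ?_⟩
          · intro h; exact hygx (by rw [← h, h2 y hys])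
          · intro h
            have : g (g y) = g (g x) := by rw [h]
            rw [h2 y hys, h2 x hx] at this
            exact hyx this)
        (by intro y hy; exact h2 y ((hmem' y).mp hy).1)
        (by intro y hy; exact h3 y ((hmem' y).mp hy).1)
      rw [Nat.even_iff] at heven ⊢
      omega

/-- the color set as a finset -/
noncomputable def CF (n : ℕ) : Finset ℤ :=
  if Even n then (Finset.Icc (-(n/2 : ℤ)) (n/2)).erase 0 else Finset.Icc (-(n/2 : ℤ)) (n/2)

lemma mem_CF (n : ℕ) (m : ℤ) : m ∈ CF n ↔ m ∈ Signed.colorSet n := by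
  unfold CF Signed.colorSet
  by_cases he : Even n
  · rw [if_pos he, Finset.mem_erase, Finset.mem_Icc]
    rw [Nat.even_iff] at he
    simp only [Set.mem_setOf_eq]
    constructor
    · rintro ⟨h0, h1, h2⟩
      exact ⟨by omega, fun _ => h0⟩
    · rintro ⟨h1, h2⟩
      have := h2 (Nat.even_iff.mpr he)
      refine ⟨this, by omega, by omega⟩
  · rw [if_neg he, Finset.mem_Icc]
    rw [Nat.not_even_iff] at he
    simp only [Set.mem_setOf_eq]
    constructor
    · rintro ⟨h1, h2⟩
      exact ⟨by omega, fun hcon => absurd (Nat.even_iff.mp hcon) (by omega)⟩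
    · rintro ⟨h1, _⟩
      omega

lemma card_CF (n : ℕ) : (CF n).card = n := by
  unfold CF
  have hicc : (Finset.Icc (-(n/2 : ℤ)) (n/2)).card = 2*(n/2)+1 := by
    rw [Int.card_Icc]
    omega
  by_cases he : Even n
  · rw [if_pos he, Finset.card_erase_of_mem (by rw [Finset.mem_Icc]; omega), hicc]
    rw [Nat.even_iff] at he
    omega
  · rw [if_neg he, hicc]
    rw [Nat.not_even_iff] at he
    omega

end Cls2
end Chunk5
section Chunk6
namespace Cls2
open Signed
variable (k : ℕ)

lemma lower_bound (hk : 1 ≤ k) (σ : Sym2 (Vt k) → ℤ)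
    (hσ : IsSignature (G k) σ) (n : ℕ) (hn : n ≤ 2*k+1) :
    ¬ Colorable (G k) σ n := by
  classical
  rintro ⟨f, hmem, hrel, hdist⟩
  have key : ∀ u w : Vt k, (G k).Adj u w → f u s(u,w) ∈ CF n := by
    intro u w h; rw [mem_CF]; exact hmem u w h
  have zero_both : ∀ u v : Vt k, (G k).Adj u v → f u s(u,v) = 0 → f v s(u,v) = 0 := by
    intro u v hadj h0
    have h := hrel u v hadj
    rw [h0] at h
    rcases hσ s(u,v) ((G k).mem_edgeSet.mpr hadj) with hs | hs <;> rw [hs] at h <;> linarith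
  have exzero : ∀ (i : Bool) (x : Zm k), ∃ w, (G k).Adj (Sum.inl (i,x)) w ∧
      f (Sum.inl (i,x)) s(Sum.inl (i,x), w) = 0 := by
    intro i x
    set u : Vt k := Sum.inl (i,x) with hu
    have hinj : Set.InjOn (fun w => f u s(u,w)) ((G k).neighborFinset u) := by
      intro a ha b hb hab
      by_contra hne
      exact hdist u a b (((G k).mem_neighborFinset ..).mp (by simpa using ha))
        (((G k).mem_neighborFinset ..).mp (by simpa using hb)) hne hab
    have hcards : ((G k).neighborFinset u).card = 2*k+1 := degree_inl k hk i x
    have hsub : ((G k).neighborFinset u).image (fun w => f u s(u,w)) ⊆ CF n := by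
      intro c hc
      obtain ⟨w, hw, rfl⟩ := Finset.mem_image.mp hc
      exact key u w (((G k).mem_neighborFinset ..).mp hw)
    have hcardim : (((G k).neighborFinset u).image (fun w => f u s(u,w))).card = 2*k+1 := by
      rw [Finset.card_image_of_injOn hinj, hcards]
    have hle : 2*k+1 ≤ n := by
      have h := Finset.card_le_card hsub
      rw [hcardim, card_CF] at h
      exact h
    have hneq : n = 2*k+1 := by omega
    subst hneq
    have heq : ((G k).neighborFinset u).image (fun w => f u s(u,w)) = CF (2*k+1) :=
      Finset.eq_of_subset_of_card_le hsub (by rw [hcardim, card_CF])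
    have h0 : (0:ℤ) ∈ CF (2*k+1) := by
      rw [mem_CF]
      refine ⟨by simp, fun hcon => ?_⟩
      rw [Nat.even_iff] at hcon
      omega
    rw [← heq] at h0
    obtain ⟨w, hw, hw0⟩ := Finset.mem_image.mp h0
    exact ⟨w, ((G k).mem_neighborFinset ..).mp hw, hw0⟩
  have uniq : ∀ (u v w : Vt k), (G k).Adj u v → (G k).Adj u w →
      f u s(u,v) = 0 → f u s(u,w) = 0 → v = w := by
    intro u v w hv hw h1 h2
    by_contra hne
    exact hdist u v w hv hw hne (by rw [h1, h2])
  have center_zero : ∀ i : Bool,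
      f (Sum.inl (i, (0:Zm k))) s(Sum.inl (i,(0:Zm k)), Sum.inr ()) = 0 := by
    intro i
    by_contra hcen
    have hex : ∀ x : Zm k, ∃ y : Zm k, Hadj k x y ∧
        f (Sum.inl (i,x)) s(Sum.inl (i,x), Sum.inl (i,y)) = 0 := by
      intro x
      obtain ⟨w, hadj, h0⟩ := exzero i x
      rcases w with ⟨i', y⟩ | ⟨⟩
      · rw [adj_inl_inl] at hadj
        obtain ⟨rfl, hh⟩ := hadj
        exact ⟨y, hh, h0⟩
      · rw [adj_inl_inr] at hadj
        subst hadj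
        exact absurd h0 hcen
    set g : Zm k → Zm k := fun x => Classical.choose (hex x) with hg
    have hgspec : ∀ x, Hadj k x (g x) ∧
        f (Sum.inl (i,x)) s(Sum.inl (i,x), Sum.inl (i,g x)) = 0 :=
      fun x => Classical.choose_spec (hex x)
    have hinv : ∀ x, g (g x) = x := by
      intro x
      obtain ⟨hadj, h0⟩ := hgspec x
      have hadj' : (G k).Adj (Sum.inl (i,x)) (Sum.inl (i, g x)) := ⟨rfl, hadj⟩
      have h0' : f (Sum.inl (i, g x)) s(Sum.inl (i, g x), Sum.inl (i, x)) = 0 := by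
        have h := zero_both _ _ hadj' h0
        rwa [Sym2.eq_swap] at h
      obtain ⟨hadj2, h02⟩ := hgspec (g x)
      have h3 := uniq (Sum.inl (i, g x)) (Sum.inl (i,x)) (Sum.inl (i, g (g x)))
        (hadj'.symm) ⟨rfl, hadj2⟩ h0' h02
      have h4 : x = g (g x) := by simpa [Prod.ext_iff] using h3
      exact h4.symm
    have hodd : ¬ Even (Finset.univ : Finset (Zm k)).card := by
      rw [Finset.card_univ, ZMod.card]
      obtain ⟨-,-,-,hMo⟩ := M_big k hk
      rw [Nat.even_iff]
      rcases hMo with ⟨c, hc⟩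
      omega
    exact hodd (even_card_of_invol _ Finset.univ g rfl (by simp)
      (fun x _ => hinv x) (fun x _ h => Hadj_irrefl k x (by have h2 := (hgspec x).1; rwa [h] at h2)))
  -- center has two zero-colored edges: contradiction
  have hadj1 : (G k).Adj (Sum.inr ()) (Sum.inl (false, (0:Zm k))) := rfl
  have hadj2 : (G k).Adj (Sum.inr ()) (Sum.inl (true, (0:Zm k))) := rfl
  have hc : ∀ i : Bool, f (Sum.inr ()) s(Sum.inr (), Sum.inl (i, (0:Zm k))) = 0 := by
    intro i
    have h := hrel (Sum.inr ()) (Sum.inl (i,(0:Zm k))) (by rfl)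
    have hswap : s(Sum.inr (), Sum.inl (i,(0:Zm k))) = s(Sum.inl (i,(0:Zm k)), Sum.inr ()) :=
      Sym2.eq_swap
    rw [hswap, center_zero i, mul_zero] at h
    rw [hswap]
    exact h
  exact hdist (Sum.inr ()) (Sum.inl (false, (0:Zm k))) (Sum.inl (true, (0:Zm k)))
    hadj1 hadj2 (by simp) (by rw [hc false, hc true])

end Cls2
end Chunk6
section Chunk7a
namespace Cls2
open Signed
variable (k : ℕ)

lemma hcop {j : ℕ} (hj : j ≤ k) : Nat.Coprime (2*j+1) (M k) := by
  have h1 : (2*j+1) ∣ Nat.factorial (2*k+1) :=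
    Nat.dvd_factorial (by omega) (by omega)
  have h2 : Nat.gcd (2*j+1) (M k) ∣ 2 * Nat.factorial (2*k+1) :=
    dvd_mul_of_dvd_right ((Nat.gcd_dvd_left _ _).trans h1) 2
  have h3 : Nat.gcd (2*j+1) (M k) ∣ M k := Nat.gcd_dvd_right _ _
  have h4 : Nat.gcd (2*j+1) (M k) ∣ 1 := by
    have h5 := Nat.dvd_sub h3 h2
    have h6 : M k - 2 * Nat.factorial (2*k+1) = 1 := by unfold M; omega
    rwa [h6] at h5
  exact Nat.eq_one_of_dvd_one h4

/-- inverse of the difference -/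
noncomputable def dinv (j : ℕ) : Zm k :=
  if h : Nat.Coprime (2*j+1) (M k)
  then (((ZMod.unitOfCoprime _ h)⁻¹ : (ZMod (M k))ˣ) : ZMod (M k)) else 1

lemma dinv_mul {j : ℕ} (hj : j ≤ k) : dinv k j * dz k j = 1 := by
  unfold dinv
  rw [dif_pos (hcop k hj)]
  have h1 : (dz k j) = ((ZMod.unitOfCoprime _ (hcop k hj) : (ZMod (M k))ˣ) : ZMod (M k)) := by
    rw [ZMod.coe_unitOfCoprime]; rfl
  rw [h1, ← Units.val_mul, inv_mul_cancel]
  rfl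

/-- base point of class j -/
def bZ (j : ℕ) : Zm k := ((j*(j+1) : ℕ) : Zm k)

/-- point on the j-cycle with parameter t -/
def ptv (j t : ℕ) : Zm k := bZ k j + (t : ℕ) * dz k j

/-- cycle parameter of x -/
noncomputable def tval (j : ℕ) (x : Zm k) : ℕ := ((x - bZ k j) * dinv k j).val

lemma tval_lt (j : ℕ) (x : Zm k) : tval k j x < M k := ZMod.val_lt _

lemma ptv_tval {j : ℕ} (hj : j ≤ k) (x : Zm k) : ptv k j (tval k j x) = x := by
  unfold ptv tval
  rw [cast_val]
  have h := dinv_mul k hj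
  calc bZ k j + (x - bZ k j) * dinv k j * dz k j
      = bZ k j + (x - bZ k j) * (dinv k j * dz k j) := by ring
    _ = x := by rw [h]; ring

lemma tval_ptv {j : ℕ} (hj : j ≤ k) {t : ℕ} (ht : t < M k) : tval k j (ptv k j t) = t := by
  unfold ptv tval
  have h := dinv_mul k hj
  have : (bZ k j + (t:ℕ) * dz k j - bZ k j) * dinv k j = ((t : ℕ) : Zm k) := by
    calc (bZ k j + (t:ℕ) * dz k j - bZ k j) * dinv k j
        = (t:ℕ) * (dz k j * dinv k j) := by ring
      _ = ((t:ℕ):Zm k) := by rw [mul_comm (dz k j), h]; ring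
  rw [this, ZMod.val_cast_of_lt ht]

lemma val_neg {x : Zm k} (hx : x ≠ 0) : (-x).val = M k - x.val := by
  have h1 : x.val ≠ 0 := fun h => hx (ZMod.val_injective _ (by simpa using h))
  have h2 : (-x) = ((M k - x.val : ℕ) : Zm k) := by
    have hlt := ZMod.val_lt x
    have : ((M k - x.val : ℕ) : Zm k) + x = ((M k - x.val + x.val : ℕ) : Zm k) := by
      push_cast
      rw [cast_val]
    rw [show M k - x.val + x.val = M k by omega, ZMod.natCast_self] at this
    linear_combination -this
  rw [h2, ZMod.val_cast_of_lt (by have := ZMod.val_lt x; omega)]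

end Cls2
end Chunk7a
section Chunk7b
namespace Cls2
open Signed
variable (k : ℕ) (σ : Sym2 (Vt k) → ℤ)

def tau (e : Sym2 (Vt k)) : ℤ := if σ e = -1 then -1 else 1

lemma tau_pm (e : Sym2 (Vt k)) : tau k σ e = 1 ∨ tau k σ e = -1 := by
  unfold tau; split_ifs <;> simp

lemma tau_ne (e : Sym2 (Vt k)) : tau k σ e ≠ 0 := by
  rcases tau_pm k σ e with h | h <;> rw [h] <;> norm_num

lemma tau_eq {u v : Vt k} (hσ : IsSignature (G k) σ) (h : (G k).Adj u v) :
    tau k σ s(u,v) = σ s(u,v) := by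
  rcases hσ s(u,v) ((G k).mem_edgeSet.mpr h) with hs | hs <;> unfold tau <;> rw [hs] <;> norm_num

noncomputable def sgn (i : Bool) (j : ℕ) (x : Zm k) : ℤ :=
  ∏ t ∈ Finset.Ico 1 (tval k j x),
    tau k σ s(Sum.inl (i, ptv k j t), Sum.inl (i, ptv k j (t+1)))

lemma sgn_pm (i : Bool) (j : ℕ) (x : Zm k) : sgn k σ i j x = 1 ∨ sgn k σ i j x = -1 := by
  unfold sgn
  apply Finset.prod_induction _ (fun z : ℤ => z = 1 ∨ z = -1)
  · rintro a b (rfl|rfl) (rfl|rfl) <;> norm_num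
  · left; rfl
  · intro t _; exact tau_pm ..

noncomputable def col (i : Bool) (j : ℕ) (x : Zm k) : ℤ := (j+1) * sgn k σ i j x

lemma col_natAbs (i : Bool) (j : ℕ) (x : Zm k) : (col k σ i j x).natAbs = j+1 := by
  unfold col
  rcases sgn_pm k σ i j x with h | h <;> rw [h] <;> [skip; skip] <;> omega

lemma col_ne (i : Bool) (j : ℕ) (x : Zm k) : col k σ i j x ≠ 0 := by
  intro h
  have := col_natAbs k σ i j x
  rw [h] at this
  simp at this

lemma sgn_rec {i : Bool} {j : ℕ} (hj : j ≤ k) (y : Zm k) (ht : 2 ≤ tval k j y) :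
    sgn k σ i j y =
      sgn k σ i j (y - dz k j) * tau k σ s(Sum.inl (i, y - dz k j), Sum.inl (i, y)) := by
  set t := tval k j y with htd
  have hylt := tval_lt k j y
  have hy : ptv k j t = y := ptv_tval k hj y
  have hy' : y - dz k j = ptv k j (t-1) := by
    conv_lhs => rw [← hy]
    unfold ptv
    have hc : ((t - 1 : ℕ) : Zm k) = ((t : ℕ) : Zm k) - 1 := by
      have := Nat.cast_sub (by omega : 1 ≤ t) (R := Zm k) (n := t) (m := 1)
      rw [this]
      norm_num
    rw [hc]
    ring
  have ht' : tval k j (y - dz k j) = t - 1 := by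
    rw [hy']; exact tval_ptv k hj (by omega)
  unfold sgn
  rw [ht', ← htd]
  have hsucc := Finset.prod_Ico_succ_top (by omega : 1 ≤ t - 1)
    (f := fun t => tau k σ s(Sum.inl (i, ptv k j t), Sum.inl (i, ptv k j (t+1))))
  rw [show t-1+1 = t from by omega] at hsucc
  rw [hsucc]
  congr 1
  have e1 : ptv k j (t-1) = y - dz k j := hy'.symm
  rw [e1, hy]

lemma p_base {j : ℕ} (h1 : 1 ≤ j) (hj : j ≤ k) : p k (j*(j+1)) = j*(j+1)+2*j+1 := by
  have hbj : bj (j*(j+1)) = j := bj_eq j _ le_rfl (by omega)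
  have hT : j*(j+1) < T k := by have := blockend_lt_T k j hj; omega
  unfold p
  rw [hbj]
  split_ifs <;> omega

lemma bZ_val (hk : 1 ≤ k) {j : ℕ} (hj : j ≤ k) : (bZ k j).val = j*(j+1) := by
  obtain ⟨hM1, hM2, -, -⟩ := M_big k hk
  have h1 : j*(j+1) ≤ k*(k+1) := Nat.mul_le_mul hj (by omega)
  have h2 : k*(k+1) ≤ (k+1)*(k+2) := Nat.mul_le_mul (by omega) (by omega)
  exact ZMod.val_cast_of_lt (by unfold T at hM2; omega)

lemma base_val (hk : 1 ≤ k) {j : ℕ} (hj : j ≤ k) :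
    (bZ k j + dz k j).val = j*(j+1)+2*j+1 := by
  obtain ⟨hM1, hM2, -, -⟩ := M_big k hk
  have h1 : j*(j+1) ≤ k*(k+1) := Nat.mul_le_mul hj (by omega)
  have h2 : k*(k+1) ≤ (k+1)*(k+2) := Nat.mul_le_mul (by omega) (by omega)
  have h3 := blockend_lt_T k j hj
  have hlt : (bZ k j).val + (dz k j).val < M k := by
    rw [bZ_val k hk hj, dz_val k hj]; unfold T at hM2 h3; omega
  rw [ZMod.val_add_of_lt hlt, bZ_val k hk hj, dz_val k hj]
  omega

lemma base_not_H (hk : 1 ≤ k) {j : ℕ} (hj : j ≤ k) :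
    ¬ Hadj k (bZ k j) (bZ k j + dz k j) := by
  rintro ⟨-, hr⟩
  apply hr
  unfold Radj
  rcases Nat.eq_zero_or_pos j with rfl | hpos
  · left
    constructor
    · rw [bZ_val k hk (by omega)]
    · left
      rw [base_val k hk (by omega)]
  · right; right; left
    obtain ⟨hM1, hM2, -, -⟩ := M_big k hk
    have h1 : j*(j+1) ≤ k*(k+1) := Nat.mul_le_mul hj (by omega)
    have h2 : k*(k+1) ≤ (k+1)*(k+2) := Nat.mul_le_mul (by omega) (by omega)
    have h3 : 1*(1+1) ≤ j*(j+1) := Nat.mul_le_mul hpos (by omega)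
    refine ⟨by rw [bZ_val k hk hj]; omega, by rw [bZ_val k hk hj]; unfold T at hM2; omega, ?_⟩
    rw [base_val k hk hj, bZ_val k hk hj, p_base k hpos hj]

lemma class0_not_at_zero (hk : 1 ≤ k) {y : Zm k} (h : Hadj k 0 y) :
    ¬ (y = 0 + dz k 0 ∨ (0:Zm k) = y + dz k 0) := by
  rintro (hy | hy)
  · exact h.2 ((Radj0_iff k hk y).mpr (Or.inl (by rw [hy, dz_zero]; ring)))
  · exact h.2 ((Radj0_iff k hk y).mpr (Or.inr (by rw [dz_zero] at hy; linear_combination -hy)))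

lemma dz_ne_zero {j : ℕ} (hj : j ≤ k) : dz k j ≠ 0 := by
  intro h
  have := dz_val k hj
  rw [h, ZMod.val_zero] at this
  omega

lemma diff_cases {x z : Zm k} (h : ∃ j, j ≤ k ∧ (z = x + dz k j ∨ x = z + dz k j)) :
    ∃ j, j ≤ k ∧ (((z-x).val = 2*j+1 ∧ z = x + dz k j) ∨
      ((z-x).val = M k - (2*j+1) ∧ x = z + dz k j)) := by
  obtain ⟨j, hj, hd⟩ := h
  refine ⟨j, hj, ?_⟩
  rcases hd with rfl | hd
  · left
    refine ⟨?_, rfl⟩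
    rw [add_sub_cancel_left, dz_val k hj]
  · right
    refine ⟨?_, hd⟩
    have hzx : z - x = - dz k j := by rw [hd]; ring
    rw [hzx, val_neg k (dz_ne_zero k hj), dz_val k hj]

end Cls2
end Chunk7b
section Chunk8
namespace Cls2
open Signed
variable (k : ℕ) (σ : Sym2 (Vt k) → ℤ)

lemma M_odd : M k % 2 = 1 := by unfold M; omega

noncomputable def cls (x z : Zm k) : ℕ := ((z - x).val - 1) / 2

noncomputable def F : Vt k → Vt k → ℤ := fun u v =>
  match u, v with
  | Sum.inr _, Sum.inl (i, _) => if i = false then 1 else -1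
  | Sum.inl (i,x), Sum.inr _ =>
      - tau k σ s(Sum.inl (i,x), Sum.inr ()) * (if i = false then 1 else -1)
  | Sum.inl (i,x), Sum.inl (_,z) =>
      if (z - x).val % 2 = 1 then col k σ i (cls k x z) x
      else - tau k σ s(Sum.inl (i,z), Sum.inl (i,x)) * col k σ i (cls k z x) z
  | Sum.inr _, Sum.inr _ => 0

noncomputable def fc : Vt k → Sym2 (Vt k) → ℤ := fun u e =>
  if h : u ∈ e then F k σ u (Sym2.Mem.other' h) else 0

lemma fc_eval (u v : Vt k) : fc k σ u s(u,v) = F k σ u v := by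
  have h : u ∈ s(u,v) := Sym2.mem_mk_left u v
  rw [fc, dif_pos h]
  congr 1
  exact Sym2.congr_right.mp (Sym2.other_spec' h)

lemma cls_eq {j : ℕ} (hj : j ≤ k) (x : Zm k) : cls k x (x + dz k j) = j := by
  unfold cls
  rw [add_sub_cancel_left, dz_val k hj]
  omega

lemma F_lower (i : Bool) {j : ℕ} (hj : j ≤ k) (x : Zm k) :
    F k σ (Sum.inl (i,x)) (Sum.inl (i, x + dz k j)) = col k σ i j x := by
  have hv : (x + dz k j - x).val = 2*j+1 := by rw [add_sub_cancel_left, dz_val k hj]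
  show (if (x + dz k j - x).val % 2 = 1 then _ else _) = _
  rw [if_pos (by rw [hv]; omega), cls_eq k hj x]

lemma F_upper (i : Bool) {j : ℕ} (hj : j ≤ k) (x : Zm k) :
    F k σ (Sum.inl (i, x + dz k j)) (Sum.inl (i, x)) =
      - tau k σ s(Sum.inl (i,x), Sum.inl (i, x + dz k j)) * col k σ i j x := by
  have hM := Mge k
  have hMo := M_odd k
  have hv : (x - (x + dz k j)).val = M k - (2*j+1) := by
    have he : x - (x + dz k j) = - dz k j := by ring
    rw [he, val_neg k (dz_ne_zero k hj), dz_val k hj]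
  show (if (x - (x + dz k j)).val % 2 = 1 then _ else _) = _
  rw [if_neg (by rw [hv]; omega), cls_eq k hj x]

lemma F_abs_upper (i : Bool) (e : Sym2 (Vt k)) (j : ℕ) (x : Zm k) :
    (- tau k σ e * col k σ i j x).natAbs = j+1 := by
  rcases tau_pm k σ e with h | h <;> rw [h] <;>
    simpa using col_natAbs k σ i j x

lemma sgn_ne (i : Bool) (j : ℕ) (x : Zm k) : sgn k σ i j x ≠ 0 := by
  rcases sgn_pm k σ i j x with h | h <;> rw [h] <;> norm_num

lemma sigma_tau (hσ : IsSignature (G k) σ) {u v : Vt k} (h : (G k).Adj u v) :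
    σ s(u,v) * tau k σ s(u,v) = 1 := by
  rw [tau_eq k σ hσ h]
  rcases hσ s(u,v) ((G k).mem_edgeSet.mpr h) with hs | hs <;> rw [hs] <;> norm_num

lemma ptv_zero (j : ℕ) : ptv k j 0 = bZ k j := by unfold ptv; simp

lemma ptv_one (j : ℕ) : ptv k j 1 = bZ k j + dz k j := by unfold ptv; simp

/-- key: distinct colors on the two class-j edges at x -/
lemma key_diff (hk : 1 ≤ k) (i : Bool) {j : ℕ} (hj : j ≤ k) (x : Zm k)
    (h1 : Hadj k x (x + dz k j)) (h2 : Hadj k x (x - dz k j)) :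
    F k σ (Sum.inl (i,x)) (Sum.inl (i, x + dz k j)) ≠
      F k σ (Sum.inl (i,x)) (Sum.inl (i, x - dz k j)) := by
  have ht2 : 2 ≤ tval k j x := by
    by_contra hlt
    interval_cases h : tval k j x
    · -- t = 0 : x = bZ
      have hx : x = bZ k j := by
        have := ptv_tval k hj x
        rw [h, ptv_zero] at this
        exact this.symm
      exact base_not_H k hk hj (by rw [← hx]; exact h1)
    · -- t = 1 : x = bZ + dz
      have hx : x = bZ k j + dz k j := by
        have := ptv_tval k hj x
        rw [h, ptv_one] at this
        exact this.symm
      have hz : x - dz k j = bZ k j := by rw [hx]; ring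
      exact base_not_H k hk hj (by
        have h2' := Hadj_symm k h2
        rw [hz] at h2'
        rwa [hx] at h2')
  have hrec := sgn_rec k σ (i := i) hj x ht2
  -- rewrite the two F values
  have e1 : F k σ (Sum.inl (i,x)) (Sum.inl (i, x + dz k j)) = col k σ i j x :=
    F_lower k σ i hj x
  have e2 : F k σ (Sum.inl (i,x)) (Sum.inl (i, x - dz k j)) =
      - tau k σ s(Sum.inl (i, x - dz k j), Sum.inl (i, x)) * col k σ i j (x - dz k j) := by
    have := F_upper k σ i hj (x - dz k j)
    rw [show x - dz k j + dz k j = x from by ring] at this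
    exact this
  rw [e1, e2]
  unfold col
  rw [hrec]
  intro heq
  set A : ℤ := sgn k σ i j (x - dz k j) with hA
  set B : ℤ := tau k σ s(Sum.inl (i, x - dz k j), Sum.inl (i, x)) with hB
  have hA0 : A ≠ 0 := sgn_ne k σ i j _
  have hB0 : B ≠ 0 := tau_ne k σ _
  have h20 : (2 : ℤ) * (((j:ℤ)+1) * (A * B)) = 0 := by linear_combination heq
  have hne : ((j:ℤ)+1) * (A * B) ≠ 0 :=
    mul_ne_zero (by positivity) (mul_ne_zero hA0 hB0)
  exact hne (by linarith)

end Cls2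
end Chunk8
section Chunk9
namespace Cls2
open Signed
variable (k : ℕ) (σ : Sym2 (Vt k) → ℤ)

lemma fc_eval' (u v : Vt k) : fc k σ v s(u,v) = F k σ v u := by
  rw [Sym2.eq_swap]; exact fc_eval k σ v u

lemma F_center1 (i : Bool) (x : Zm k) (u : Unit) :
    F k σ (Sum.inl (i,x)) (Sum.inr u) =
      - tau k σ s(Sum.inl (i,x), Sum.inr ()) * (if i = false then 1 else -1) := rfl

lemma F_center2 (i : Bool) (x : Zm k) (u : Unit) :
    F k σ (Sum.inr u) (Sum.inl (i,x)) = (if i = false then 1 else -1) := rfl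

lemma F_center_abs (i : Bool) (x : Zm k) (u : Unit) :
    (F k σ (Sum.inl (i,x)) (Sum.inr u)).natAbs = 1 := by
  rw [F_center1]
  rcases tau_pm k σ s(Sum.inl (i,x), Sum.inr ()) with h | h <;> rw [h] <;>
    rcases i with _|_ <;> norm_num

lemma F_v_natAbs (i : Bool) {j : ℕ} (hj : j ≤ k) {x z : Zm k}
    (hc : ((z-x).val = 2*j+1 ∧ z = x + dz k j) ∨ ((z-x).val = M k - (2*j+1) ∧ x = z + dz k j)) :
    (F k σ (Sum.inl (i,x)) (Sum.inl (i,z))).natAbs = j + 1 := by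
  rcases hc with ⟨hv, rfl⟩ | ⟨hv, h1⟩
  · rw [F_lower k σ i hj x]; exact col_natAbs ..
  · have h2 := F_upper k σ i hj z
    rw [← h1] at h2
    rw [h2]
    exact F_abs_upper ..

lemma upper_coloring (hk : 1 ≤ k) (hσ : IsSignature (G k) σ) :
    IsEdgeColoring (G k) σ (2*k+2) (fc k σ) := by
  have hMo := M_odd k
  refine ⟨?_, ?_, ?_⟩
  · -- membership
    intro u v hadj
    rw [fc_eval]
    simp only [colorSet, Set.mem_setOf_eq]
    rcases u with ⟨i,x⟩ | uc <;> rcases v with ⟨i',z⟩ | vc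
    · obtain ⟨rfl, hH⟩ := hadj
      obtain ⟨j, hj, hcase⟩ := diff_cases k hH.1
      have habs := F_v_natAbs k σ i hj hcase
      exact ⟨by omega, fun _ h0 => by rw [h0] at habs; simp at habs⟩
    · have habs := F_center_abs k σ i x vc
      exact ⟨by omega, fun _ h0 => by rw [h0] at habs; simp at habs⟩
    · have habs : (F k σ (Sum.inr uc) (Sum.inl (i',z))).natAbs = 1 := by
        rw [F_center2]
        rcases i' with _|_ <;> norm_num
      exact ⟨by omega, fun _ h0 => by rw [h0] at habs; simp at habs⟩
    · exact absurd hadj (adj_inr_inr k)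
  · -- edge relation
    intro u v hadj
    rw [fc_eval, fc_eval']
    rcases u with ⟨i,x⟩ | ⟨⟩ <;> rcases v with ⟨i',z⟩ | ⟨⟩
    · have hadj' : (G k).Adj (Sum.inl (i,x)) (Sum.inl (i',z)) := hadj
      obtain ⟨rfl, hH⟩ := hadj
      obtain ⟨j, hj, hcase⟩ := diff_cases k hH.1
      rcases hcase with ⟨hv, rfl⟩ | ⟨hv, h1⟩
      · rw [F_lower k σ i hj x, F_upper k σ i hj x, tau_eq k σ hσ hadj']
        rcases hσ _ ((G k).mem_edgeSet.mpr hadj') with hs | hs <;> rw [hs] <;> ring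
      · have h2 := F_upper k σ i hj z
        have h3 := F_lower k σ i hj z
        rw [← h1] at h2 h3
        rw [h2, h3,
          (Sym2.eq_swap : s(Sum.inl (i,z), Sum.inl (i,x)) = s(Sum.inl (i,x), Sum.inl (i,z))),
          tau_eq k σ hσ hadj']
    · rw [F_center1, F_center2, tau_eq k σ hσ hadj]
    · rw [F_center1, F_center2,
        (Sym2.eq_swap : s(Sum.inl (i',z), Sum.inr ()) = s(Sum.inr (), Sum.inl (i',z))),
        tau_eq k σ hσ hadj]
      rcases hσ _ ((G k).mem_edgeSet.mpr hadj) with hs | hs <;> rw [hs] <;> ring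
    · exact absurd hadj (adj_inr_inr k)
  · -- distinctness
    intro u v w hadjv hadjw hvw
    rw [fc_eval, fc_eval]
    rcases u with ⟨i,x⟩ | uc
    · rcases v with ⟨iv,zv⟩ | vc <;> rcases w with ⟨iw,zw⟩ | wc
      · -- both copy neighbors
        obtain ⟨rfl, hHv⟩ := hadjv
        obtain ⟨rfl, hHw⟩ := hadjw
        have hzz : zv ≠ zw := fun h => hvw (by rw [h])
        obtain ⟨j1, hj1, hc1⟩ := diff_cases k hHv.1
        obtain ⟨j2, hj2, hc2⟩ := diff_cases k hHw.1
        by_cases hjj : j1 = j2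
        · subst hjj
          rcases hc1 with ⟨hv1, h1⟩ | ⟨hv1, h1⟩ <;> rcases hc2 with ⟨hv2, h2⟩ | ⟨hv2, h2⟩
          · exact absurd (h1.trans h2.symm) hzz
          · -- v lower, w upper
            have hzw : zw = x - dz k j1 := by rw [h2]; ring
            rw [h1, hzw]
            exact key_diff k σ hk i hj1 x (h1 ▸ hHv) (hzw ▸ hHw)
          · -- v upper, w lower
            have hzv : zv = x - dz k j1 := by rw [h1]; ring
            rw [h2, hzv]
            exact (key_diff k σ hk i hj1 x (h2 ▸ hHw) (hzv ▸ hHv)).symm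
          · -- both upper
            exact absurd (by
              have h3 : zv + dz k j1 = zw + dz k j1 := by rw [← h1, ← h2]
              exact add_right_cancel h3) hzz
        · have n1 := F_v_natAbs k σ i hj1 hc1
          have n2 := F_v_natAbs k σ i hj2 hc2
          intro h
          rw [h] at n1
          omega
      · -- v copy, w center (so x = 0)
        obtain ⟨rfl, hHv⟩ := hadjv
        have hx0 : x = 0 := hadjw
        subst hx0
        obtain ⟨j, hj, hc⟩ := diff_cases k hHv.1
        have hj1 : 1 ≤ j := by
          rcases Nat.eq_zero_or_pos j with rfl | h
          · exfalso
            apply class0_not_at_zero k hk hHv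
            rcases hc with ⟨-, h⟩ | ⟨-, h⟩
            · exact Or.inl h
            · exact Or.inr h
          · exact h
        have n1 := F_v_natAbs k σ i hj hc
        have n2 := F_center_abs k σ i 0 wc
        intro h
        rw [h] at n1
        rw [n2] at n1
        omega
      · -- v center, w copy
        obtain ⟨rfl, hHw⟩ := hadjw
        have hx0 : x = 0 := hadjv
        subst hx0
        obtain ⟨j, hj, hc⟩ := diff_cases k hHw.1
        have hj1 : 1 ≤ j := by
          rcases Nat.eq_zero_or_pos j with rfl | h
          · exfalso
            apply class0_not_at_zero k hk hHw
            rcases hc with ⟨-, h⟩ | ⟨-, h⟩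
            · exact Or.inl h
            · exact Or.inr h
          · exact h
        have n1 := F_v_natAbs k σ i hj hc
        have n2 := F_center_abs k σ i 0 vc
        intro h
        rw [← h] at n1
        rw [n2] at n1
        omega
      · cases vc; cases wc; exact absurd rfl hvw
    · -- center vertex
      rcases v with ⟨iv,zv⟩ | vc
      · rcases w with ⟨iw,zw⟩ | wc
        · have hv0 : zv = 0 := hadjv
          have hw0 : zw = 0 := hadjw
          subst hv0; subst hw0
          have hii : iv ≠ iw := fun h => hvw (by rw [h])
          rw [F_center2, F_center2]
          rcases iv with _|_ <;> rcases iw with _|_ <;> simp_all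
        · exact absurd hadjw (adj_inr_inr k)
      · exact absurd hadjv (adj_inr_inr k)

lemma colorable_G (hk : 1 ≤ k) (hσ : IsSignature (G k) σ) :
    Colorable (G k) σ (2*k+2) := ⟨fc k σ, upper_coloring k σ hk hσ⟩

lemma chromIndex_G (hk : 1 ≤ k) (hσ : IsSignature (G k) σ) :
    chromIndex (G k) σ = 2*k+2 := by
  have hcol := colorable_G k σ hk hσ
  unfold chromIndex
  apply le_antisymm
  · exact Nat.sInf_le hcol
  · by_contra h
    push_neg at h
    have hne : {n | Colorable (G k) σ n}.Nonempty := ⟨_, hcol⟩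
    have hmem := Nat.sInf_mem hne
    exact lower_bound k hk σ hσ _ (by omega) hmem

end Cls2
end Chunk9
section Final
open Signed

variable {V W : Type*}

lemma colorable_map (e : V ≃ W) (G : SimpleGraph V) (σ' : Sym2 W → ℤ) (n : ℕ) :
    Colorable G (fun z => σ' (Sym2.map e z)) n ↔ Colorable (G.comap ⇑e.symm) σ' n := by
  have hmap : ∀ (a b : W), Sym2.map e s(e.symm a, e.symm b) = s(a, b) := by
    intro a b
    rw [Sym2.map_pair_eq, e.apply_symm_apply, e.apply_symm_apply]
  have hmap2 : ∀ (a b : W), Sym2.map e.symm s(a, b) = s(e.symm a, e.symm b) := by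
    intro a b
    rw [Sym2.map_pair_eq]
  have hmap3 : ∀ (u v : V), Sym2.map e s(u, v) = s(e u, e v) := fun u v => Sym2.map_pair_eq ..
  have hmap4 : ∀ (u v : V), Sym2.map e.symm s(e u, e v) = s(u, v) := by
    intro u v
    rw [Sym2.map_pair_eq, e.symm_apply_apply, e.symm_apply_apply]
  constructor
  · rintro ⟨f, h1, h2, h3⟩
    refine ⟨fun w z => f (e.symm w) (Sym2.map e.symm z), ?_, ?_, ?_⟩
    · intro a b hab
      dsimp only
      rw [hmap2]
      have := h1 (e.symm a) (e.symm b) hab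
      exact this
    · intro a b hab
      dsimp only
      rw [hmap2]
      have := h2 (e.symm a) (e.symm b) hab
      rw [this]
      dsimp only
      rw [hmap]
    · intro a b c hab hac hbc
      dsimp only
      rw [hmap2, hmap2]
      exact h3 (e.symm a) (e.symm b) (e.symm c) hab hac
        (fun h => hbc (by rw [← e.apply_symm_apply b, h, e.apply_symm_apply]))
  · rintro ⟨f, h1, h2, h3⟩
    have hadj : ∀ u v : V, G.Adj u v → (G.comap ⇑e.symm).Adj (e u) (e v) := by
      intro u v h
      show G.Adj (e.symm (e u)) (e.symm (e v))
      rwa [e.symm_apply_apply, e.symm_apply_apply]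
    refine ⟨fun v z => f (e v) (Sym2.map e z), ?_, ?_, ?_⟩
    · intro u v huv
      dsimp only
      rw [hmap3]
      exact h1 (e u) (e v) (hadj u v huv)
    · intro u v huv
      dsimp only
      rw [hmap3]
      have := h2 (e u) (e v) (hadj u v huv)
      rw [this]
    · intro u v w huv huw hvw
      dsimp only
      rw [hmap3, hmap3]
      exact h3 (e u) (e v) (e w) (hadj u v huv) (hadj u w huw)
        (fun h => hvw (e.injective h))

lemma degree_ncard (G : SimpleGraph V) [Fintype V] [DecidableRel G.Adj] (v : V)
    [Fintype (G.neighborSet v)] :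
    G.degree v = (G.neighborSet v).ncard := by
  rw [SimpleGraph.degree, SimpleGraph.neighborFinset]
  exact (Set.ncard_eq_toFinset_card' _).symm

lemma neighborSet_comap [Fintype V] [Fintype W] (e : V ≃ W) (G : SimpleGraph V) (w : W) :
    (G.comap ⇑e.symm).neighborSet w = e '' (G.neighborSet (e.symm w)) := by
  ext a
  simp only [SimpleGraph.mem_neighborSet, SimpleGraph.comap_adj, Set.mem_image]
  constructor
  · intro h
    exact ⟨e.symm a, h, e.apply_symm_apply a⟩
  · rintro ⟨v, hv, rfl⟩
    rwa [e.symm_apply_apply]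

lemma degree_comap_eq [Fintype V] [Fintype W] (e : V ≃ W) (G : SimpleGraph V)
    [DecidableRel G.Adj] [DecidableRel (G.comap ⇑e.symm).Adj] (w : W) :
    (G.comap ⇑e.symm).degree w = G.degree (e.symm w) := by
  rw [degree_ncard, degree_ncard, neighborSet_comap e G w,
    Set.ncard_image_of_injective _ e.injective]

lemma maxDeg_comap [Fintype V] [Fintype W] (e : V ≃ W) (G : SimpleGraph V) :
    maxDeg (G.comap ⇑e.symm) = maxDeg G := by
  unfold maxDeg
  letI : DecidableRel G.Adj := Classical.decRel _
  letI : DecidableRel (G.comap ⇑e.symm).Adj := Classical.decRel _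
  apply le_antisymm
  · apply SimpleGraph.maxDegree_le_of_forall_degree_le
    intro w
    rw [@degree_comap_eq V W _ _ e G (Classical.decRel _) (Classical.decRel _) w]
    exact SimpleGraph.degree_le_maxDegree (G := G) _
  · apply SimpleGraph.maxDegree_le_of_forall_degree_le
    intro v
    have h1 := @degree_comap_eq V W _ _ e G (Classical.decRel _) (Classical.decRel _) (e v)
    rw [e.symm_apply_apply] at h1
    rw [← h1]
    exact SimpleGraph.degree_le_maxDegree (G := G.comap ⇑e.symm) (e v)

theorem exists_class2_graph' (k : ℕ) (hk : 1 ≤ k) :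
    ∃ (n : ℕ) (G : SimpleGraph (Fin n)), maxDeg G = 2 * k + 1 ∧ Class2pm G := by
  classical
  set e : Cls2.Vt k ≃ Fin (Fintype.card (Cls2.Vt k)) := Fintype.equivFin _ with he
  refine ⟨Fintype.card (Cls2.Vt k), (Cls2.G k).comap ⇑e.symm, ?_, ?_⟩
  · rw [maxDeg_comap e (Cls2.G k), Cls2.maxDeg_G k hk]
  · intro σ' hσ'
    have hsig : IsSignature (Cls2.G k) (fun z => σ' (Sym2.map e z)) := by
      intro z hz
      induction z with
      | _ u v =>
        apply hσ'
        rw [Sym2.map_pair_eq]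
        rw [SimpleGraph.mem_edgeSet] at hz ⊢
        show (Cls2.G k).Adj (e.symm (e u)) (e.symm (e v))
        rwa [e.symm_apply_apply, e.symm_apply_apply]
    have hset : {n | Colorable ((Cls2.G k).comap ⇑e.symm) σ' n} =
        {n | Colorable (Cls2.G k) (fun z => σ' (Sym2.map e z)) n} := by
      ext n
      simp only [Set.mem_setOf_eq]
      exact (colorable_map e (Cls2.G k) σ' n).symm
    rw [maxDeg_comap e (Cls2.G k), Cls2.maxDeg_G k hk]
    have hci := Cls2.chromIndex_G k (fun z => σ' (Sym2.map e z)) hk hsig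
    unfold chromIndex at hci ⊢
    rw [hset, hci]

end Final

/-- For every `k ≥ 1` there is a graph of class `2^±` with maximum degree `2k+1`. -/
theorem exists_class2_graph (k : ℕ) (hk : 1 ≤ k) :
    ∃ (n : ℕ) (G : SimpleGraph (Fin n)), maxDeg G = 2 * k + 1 ∧ Class2pm G := exists_class2_graph' k hk
end

section
/- Every tree with maximum degree at least 2 is of class 1^±: for every signature σ on a tree T, χ'(T, σ) = Δ(T). -/
open SimpleGraph

open Signed SimpleGraph

namespace Signed

noncomputable def Mfin (n : ℕ) : Finset ℤ :=
  if Even n then (Finset.Icc (-(n/2 : ℕ) : ℤ) ((n/2 : ℕ) : ℤ)).erase 0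
  else Finset.Icc (-(n/2 : ℕ) : ℤ) ((n/2 : ℕ) : ℤ)

lemma mem_Mfin {n : ℕ} {m : ℤ} : m ∈ Mfin n ↔ m ∈ colorSet n := by
  have habs : m ∈ Finset.Icc (-(n/2 : ℕ) : ℤ) ((n/2 : ℕ) : ℤ) ↔ m.natAbs ≤ n / 2 := by
    rw [Finset.mem_Icc]; omega
  unfold Mfin colorSet
  by_cases hn : Even n
  · rw [if_pos hn]
    simp only [Finset.mem_erase, habs, Set.mem_setOf_eq]
    constructor
    · rintro ⟨h0, h⟩; exact ⟨by omega, fun _ => h0⟩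
    · rintro ⟨h, h0⟩; exact ⟨h0 hn, by omega⟩
  · rw [if_neg hn]
    simp only [habs, Set.mem_setOf_eq]
    have : ¬ (2 ∣ n) := by rw [Nat.even_iff] at hn; omega
    constructor
    · intro h; exact ⟨by omega, fun he => absurd he hn⟩
    · rintro ⟨h, _⟩; omega

lemma card_Mfin (n : ℕ) : (Mfin n).card = n := by
  unfold Mfin
  have h := Int.card_Icc (-(n/2 : ℕ) : ℤ) ((n/2 : ℕ) : ℤ)
  by_cases hn : Even n
  · rw [if_pos hn, Finset.card_erase_of_mem (by rw [Finset.mem_Icc]; omega), h]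
    have h2 : n % 2 = 0 := Nat.even_iff.mp hn
    omega
  · rw [if_neg hn, h]
    have : ¬ (2 ∣ n) := by rw [Nat.even_iff] at hn; omega
    omega

lemma exists_color {n : ℕ} {s : Finset ℤ} (hs : s.card < n) :
    ∃ c ∈ colorSet n, c ∉ s := by
  have : (Mfin n \ s).Nonempty := by
    rw [← Finset.card_pos]
    have := Finset.le_card_sdiff s (Mfin n)
    rw [card_Mfin] at this
    omega
  obtain ⟨c, hc⟩ := this
  rw [Finset.mem_sdiff] at hc
  exact ⟨c, mem_Mfin.mp hc.1, hc.2⟩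

lemma neg_sig_mem_colorSet {n : ℕ} {c t : ℤ} (ht : t = 1 ∨ t = -1)
    (hc : c ∈ colorSet n) : -t * c ∈ colorSet n := by
  rcases ht with h | h <;> subst h <;>
    simpa [colorSet, Set.mem_setOf_eq, Int.natAbs_neg, neg_eq_zero] using hc

lemma exists_leaf {V : Type*} [Fintype V] {G : SimpleGraph V} (hG : G.IsAcyclic)
    {x y : V} (hxy : G.Adj x y) :
    ∃ a b, G.Adj a b ∧ ∀ w, G.Adj a w → w = b := by
  classical
  set L : Set ℕ := {n | ∃ (a : V) (b : V) (p : G.Walk a b), p.IsPath ∧ p.length = n} with hL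
  have hbdd : BddAbove L := by
    refine ⟨Fintype.card V, ?_⟩
    rintro n ⟨a, b, p, hp, rfl⟩
    exact le_of_lt hp.length_lt
  have h1 : 1 ∈ L := by
    refine ⟨x, y, Walk.cons hxy Walk.nil, ?_, rfl⟩
    simp [Walk.cons_isPath_iff, hxy.ne]
  have hmem : sSup L ∈ L := Nat.sSup_mem ⟨1, h1⟩ hbdd
  have hone : 1 ≤ sSup L := le_csSup hbdd h1
  obtain ⟨a, b, p, hp, hlen⟩ := hmem
  cases p with
  | nil => simp at hlen; omega
  | cons h' p' =>
    rename_i b'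
    refine ⟨a, b', h', fun w hw => ?_⟩
    by_contra hwb
    rw [Walk.cons_isPath_iff] at hp
    by_cases hws : w ∈ (Walk.cons h' p').support
    · have hwa : w ≠ a := fun h => (G.irrefl (h ▸ hw)).elim
      set q := (Walk.cons h' p').takeUntil w hws with hq
      have hqp : q.IsPath := ((Walk.cons_isPath_iff h' p').mpr hp).takeUntil hws
      have hnotedge : s(w, a) ∉ q.edges := by
        intro hmemq
        have : s(w, a) ∈ (Walk.cons h' p').edges := Walk.edges_takeUntil_subset _ hws hmemq
        rw [Walk.edges_cons, List.mem_cons] at this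
        rcases this with h | h
        · rw [Sym2.eq_iff] at h
          rcases h with ⟨h1, h2⟩ | ⟨h1, h2⟩
          · exact hwa h1
          · exact hwb h1
        · exact hp.2 (Walk.snd_mem_support_of_mem_edges _ h)
      have hcyc : (Walk.cons hw.symm q).IsCycle :=
        (Walk.cons_isCycle_iff q hw.symm).mpr ⟨hqp, hnotedge⟩
      exact hG _ hcyc
    · have hlonger : (Walk.cons hw.symm (Walk.cons h' p')).IsPath :=
        ((Walk.cons_isPath_iff h' p').mpr hp).cons hws
      have : (Walk.cons h' p').length + 1 ∈ L := ⟨w, b, _, hlonger, rfl⟩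
      have := le_csSup hbdd this
      omega

lemma colorable_of_no_edges {V : Type*} {G : SimpleGraph V} (h : G.edgeSet = ∅)
    (σ : Sym2 V → ℤ) (n : ℕ) : Colorable G σ n := by
  have key : ∀ u v, ¬ G.Adj u v := by
    intro u v huv
    have : s(u, v) ∈ G.edgeSet := huv
    rw [h] at this
    exact this
  exact ⟨fun _ _ => 0, fun u v huv => absurd huv (key u v),
    fun u v huv => absurd huv (key u v), fun u v w huv => absurd huv (key u v)⟩

lemma forest_colorable {V : Type*} [Fintype V] (n : ℕ) :
    ∀ (k : ℕ) (G : SimpleGraph V), G.edgeSet.ncard ≤ k → G.IsAcyclic →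
      (∀ v, (G.neighborSet v).ncard ≤ n) → ∀ σ : Sym2 V → ℤ, IsSignature G σ →
      Colorable G σ n := by
  classical
  intro k
  induction k with
  | zero =>
    intro G hcard _ _ σ _
    refine colorable_of_no_edges ?_ σ n
    rw [← Set.ncard_eq_zero G.edgeSet.toFinite]; omega
  | succ k ih =>
    intro G hcard hacyc hdeg σ hσ
    by_cases he : G.edgeSet = ∅
    · exact colorable_of_no_edges he σ n
    · obtain ⟨e₀, he₀⟩ := Set.nonempty_iff_ne_empty.mpr he
      induction e₀ using Sym2.ind with
      | h x y =>
      have hxy : G.Adj x y := he₀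
      obtain ⟨a, b, hab, hleaf⟩ := exists_leaf hacyc hxy
      set e : Sym2 V := s(a, b) with hedef
      have hemem : e ∈ G.edgeSet := hab
      set G' := G.deleteEdges {e} with hG'def
      have hG'le : G' ≤ G := deleteEdges_le _
      have hG'adj : ∀ u v : V, G'.Adj u v ↔ G.Adj u v ∧ s(u, v) ≠ e := by
        intro u v; rw [hG'def, deleteEdges_adj]; simp
      have hG'edge : G'.edgeSet = G.edgeSet \ {e} := by
        rw [hG'def, edgeSet_deleteEdges]
      -- card
      have hcard' : G'.edgeSet.ncard ≤ k := by
        rw [hG'edge, Set.ncard_diff_singleton_of_mem hemem]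
        have : 0 < G.edgeSet.ncard := (Set.ncard_pos G.edgeSet.toFinite).mpr ⟨e, hemem⟩
        omega
      -- acyclic
      have hacyc' : G'.IsAcyclic := fun v c hc => hacyc (c.mapLe hG'le) (hc.mapLe _)
      -- degrees
      have hdeg' : ∀ v, (G'.neighborSet v).ncard ≤ n := fun v =>
        le_trans (Set.ncard_le_ncard (fun w hw => hG'le hw) (G.neighborSet v).toFinite) (hdeg v)
      -- signature
      have hσ' : IsSignature G' σ := fun e' he' => hσ e' (hG'edge ▸ he').1
      obtain ⟨f, hf1, hf2, hf3⟩ := ih G' hcard' hacyc' hdeg' σ hσ'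
      -- neighbor set of b in G'
      have hNb : G'.neighborSet b = G.neighborSet b \ {a} := by
        ext w
        simp only [mem_neighborSet, hG'adj, Set.mem_diff, Set.mem_singleton_iff]
        constructor
        · rintro ⟨hadj, hne⟩
          refine ⟨hadj, fun hwa => hne ?_⟩
          subst hwa
          rw [hedef, Sym2.eq_swap]
        · rintro ⟨hadj, hne⟩
          refine ⟨hadj, fun hw => ?_⟩
          rw [hedef, Sym2.eq_iff] at hw
          rcases hw with ⟨h1, h2⟩ | ⟨h1, h2⟩
          · exact hab.ne h1.symm
          · exact hne h2
      have hamem : a ∈ G.neighborSet b := hab.symm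
      have hNbcard : (G'.neighborSet b).ncard < n := by
        rw [hNb, Set.ncard_diff_singleton_of_mem hamem]
        have h1 : 0 < (G.neighborSet b).ncard :=
          (Set.ncard_pos (G.neighborSet b).toFinite).mpr ⟨a, hamem⟩
        have h2 := hdeg b
        omega
      -- used colors at b
      have husedfin : ((fun w => f b s(b, w)) '' (G'.neighborSet b)).Finite :=
        ((G'.neighborSet b).toFinite).image _
      have husedcard : husedfin.toFinset.card < n := by
        rw [← Set.ncard_eq_toFinset_card _ husedfin]
        exact lt_of_le_of_lt (Set.ncard_image_le (G'.neighborSet b).toFinite) hNbcard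
      obtain ⟨c, hcmem, hcnot⟩ := exists_color husedcard
      have hcnot' : ∀ w, G'.Adj b w → f b s(b, w) ≠ c := by
        intro w hw hEq
        exact hcnot (husedfin.mem_toFinset.mpr ⟨w, hw, hEq⟩)
      have σe : σ e = 1 ∨ σ e = -1 := hσ e hemem
      refine ⟨fun w e' => if e' = e then (if w = b then c else -σ e * c) else f w e',
        ?_, ?_, ?_⟩
      · intro u v huv
        dsimp only
        by_cases hcase : s(u, v) = e
        · simp only [if_pos hcase]
          by_cases hub : u = b
          · rw [if_pos hub]; exact hcmem
          · rw [if_neg hub]; exact neg_sig_mem_colorSet σe hcmem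
        · simp only [if_neg hcase]
          exact hf1 u v ((hG'adj u v).mpr ⟨huv, hcase⟩)
      · intro u v huv
        dsimp only
        by_cases hcase : s(u, v) = e
        · have huvab : (u = a ∧ v = b) ∨ (u = b ∧ v = a) := by
            rw [hedef, Sym2.eq_iff] at hcase; tauto
          simp only [if_pos hcase, hcase]
          rcases huvab with ⟨rfl, rfl⟩ | ⟨rfl, rfl⟩
          · simp [hab.ne]
          · rcases σe with h | h <;> simp [hab.ne, h]
        · simp only [if_neg hcase]
          exact hf2 u v ((hG'adj u v).mpr ⟨huv, hcase⟩)
      · intro u v w huv huw hvw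
        dsimp only
        by_cases hv' : s(u, v) = e <;> by_cases hw' : s(u, w) = e
        · exfalso
          have : s(u, v) = s(u, w) := hv'.trans hw'.symm
          rw [Sym2.eq_iff] at this
          rcases this with ⟨_, h2⟩ | ⟨h1, h2⟩
          · exact hvw h2
          · exact G.irrefl (h1 ▸ huw)
        · simp only [if_pos hv', if_neg hw']
          have huab : (u = a ∧ v = b) ∨ (u = b ∧ v = a) := by
            rw [hedef, Sym2.eq_iff] at hv'; tauto
          rcases huab with ⟨rfl, rfl⟩ | ⟨rfl, rfl⟩
          · exact absurd (hleaf w huw) hvw.symm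
          · rw [if_pos (rfl : (u : V) = u)]
            exact fun h => hcnot' w ((hG'adj u w).mpr ⟨huw, hw'⟩) h.symm
        · simp only [if_neg hv', if_pos hw']
          have huab : (u = a ∧ w = b) ∨ (u = b ∧ w = a) := by
            rw [hedef, Sym2.eq_iff] at hw'; tauto
          rcases huab with ⟨rfl, rfl⟩ | ⟨rfl, rfl⟩
          · exact absurd (hleaf v huv) hvw
          · rw [if_pos (rfl : (u : V) = u)]
            exact hcnot' v ((hG'adj u v).mpr ⟨huv, hv'⟩)
        · simp only [if_neg hv', if_neg hw']
          exact hf3 u v w ((hG'adj u v).mpr ⟨huv, hv'⟩) ((hG'adj u w).mpr ⟨huw, hw'⟩) hvw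


lemma deg_le_of_colorable {V : Type*} {G : SimpleGraph V} {σ : Sym2 V → ℤ}
    {m : ℕ} (h : Colorable G σ m) (v : V) : (G.neighborSet v).ncard ≤ m := by
  classical
  obtain ⟨f, hf1, _, hf3⟩ := h
  have hinj : Set.InjOn (fun w => f v s(v, w)) (G.neighborSet v) := by
    intro w1 h1 w2 h2 heq
    by_contra hne
    exact hf3 v w1 w2 h1 h2 hne heq
  have himg : (fun w => f v s(v, w)) '' (G.neighborSet v) ⊆ ↑(Mfin m) := by
    rintro _ ⟨w, hw, rfl⟩
    exact mem_Mfin.mpr (hf1 v w hw)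
  calc (G.neighborSet v).ncard
      = ((fun w => f v s(v, w)) '' (G.neighborSet v)).ncard :=
        (Set.ncard_image_of_injOn hinj).symm
    _ ≤ (↑(Mfin m) : Set ℤ).ncard := Set.ncard_le_ncard himg (Mfin m).finite_toSet
    _ = m := by rw [Set.ncard_coe_finset, card_Mfin]

end Signed




/-- Every tree with maximum degree at least `2` is of class `1^±`. -/
theorem tree_class1 {V : Type*} [Fintype V] (G : SimpleGraph V)
    (htree : G.IsTree) (hΔ : 2 ≤ maxDeg G) :
    ∀ σ : Sym2 V → ℤ, IsSignature G σ → chromIndex G σ = maxDeg G := by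
  classical
  intro σ hσ
  letI : DecidableRel G.Adj := Classical.decRel _
  have hmaxdef : maxDeg G = G.maxDegree := rfl
  have hdegv : ∀ v : V, (G.neighborSet v).ncard = G.degree v := by
    intro v
    rw [SimpleGraph.degree, neighborFinset_def, Set.ncard_eq_toFinset_card']
  have hub : Colorable G σ (maxDeg G) := by
    refine forest_colorable (maxDeg G) (G.edgeSet.ncard) G le_rfl htree.IsAcyclic ?_ σ hσ
    intro v
    rw [hdegv v, hmaxdef]
    exact G.degree_le_maxDegree v
  have hne : Nonempty V := by
    by_contra h
    rw [not_nonempty_iff] at h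
    have : maxDeg G = 0 := by
      rw [hmaxdef, SimpleGraph.maxDegree]
      simp [Finset.univ_eq_empty]
    omega
  obtain ⟨v, hv⟩ := G.exists_maximal_degree_vertex
  have hlow : ∀ m, Colorable G σ m → maxDeg G ≤ m := by
    intro m hm
    have h1 := deg_le_of_colorable hm v
    rw [hdegv v] at h1
    rw [hmaxdef, hv]
    exact h1
  have hmem : maxDeg G ∈ {n | Colorable G σ n} := hub
  refine le_antisymm (Nat.sInf_le hmem) ?_
  exact hlow _ (Nat.sInf_mem ⟨_, hmem⟩)
end

section
/- The wheel W_4 = K_4 is of class 1^±: for every signature σ on K_4, χ'(K_4, σ) = 3. Specifically, for any σ, K_4 decomposes into a perfect matching and a balanced spanning 4-cycle. -/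
open SimpleGraph

open Signed SimpleGraph


private lemma walk_prod {V : Type*} (σ : Sym2 V → ℤ) {H : SimpleGraph V} {θ : V → ℤ}
    (hθ : ∀ v, θ v * θ v = 1)
    (hedge : ∀ u v, H.Adj u v → σ s(u,v) = θ u * θ v) :
    ∀ {u v : V} (w : H.Walk u v), (w.edges.map σ).prod = θ u * θ v := by
  intro u v w
  induction w with
  | nil => simpa using (hθ _).symm
  | @cons u x v h p ih =>
      simp only [SimpleGraph.Walk.edges_cons, List.map_cons, List.prod_cons, ih]
      rw [hedge _ _ h]
      linear_combination (θ u * θ v) * hθ x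

set_option maxHeartbeats 2000000 in
private lemma key (σ : Sym2 (Fin 4) → ℤ) (a b c d : Fin 4)
    (hab : a ≠ b) (hac : a ≠ c) (had : a ≠ d) (hbc : b ≠ c) (hbd : b ≠ d) (hcd : c ≠ d)
    (h1 : σ s(a,b) = 1 ∨ σ s(a,b) = -1) (h2 : σ s(b,c) = 1 ∨ σ s(b,c) = -1)
    (h3 : σ s(c,d) = 1 ∨ σ s(c,d) = -1) (h4 : σ s(a,d) = 1 ∨ σ s(a,d) = -1)
    (h5 : σ s(a,c) = 1 ∨ σ s(a,c) = -1) (h6 : σ s(b,d) = 1 ∨ σ s(b,d) = -1)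
    (hbal : σ s(a,b) * σ s(b,c) * σ s(c,d) * σ s(a,d) = 1) :
    Colorable (completeGraph (Fin 4)) σ 3 ∧
    ∃ (M : Set (Sym2 (Fin 4))) (C : SimpleGraph (Fin 4)),
      IsMatchingSet (completeGraph (Fin 4)) M ∧ (∀ v : Fin 4, ∃ e ∈ M, v ∈ e) ∧
      C ≤ completeGraph (Fin 4) ∧ C.Connected ∧ (∀ v : Fin 4, deg C v = 2) ∧
      Balanced C σ ∧ Disjoint M C.edgeSet ∧
      M ∪ C.edgeSet = (completeGraph (Fin 4)).edgeSet := by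
  -- cover
  have hcov : ∀ v : Fin 4, v = a ∨ v = b ∨ v = c ∨ v = d := by
    intro v
    by_contra hv
    push_neg at hv
    obtain ⟨va, vb, vc, vd⟩ := hv
    have : ({v, a, b, c, d} : Finset (Fin 4)).card ≤ 4 :=
      le_trans (Finset.card_le_univ _) (by simp)
    rw [Finset.card_insert_of_notMem (by simp [va, vb, vc, vd]),
        Finset.card_insert_of_notMem (by simp [hab, hac, had]),
        Finset.card_insert_of_notMem (by simp [hbc, hbd]),
        Finset.card_insert_of_notMem (by simp [hcd])] at this
    simp at this
  -- potential function
  set s1 := σ s(a,b) with hs1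
  set s2 := σ s(b,c) with hs2
  set s3 := σ s(c,d) with hs3
  set θ : Fin 4 → ℤ := fun v => if v = a then 1 else if v = b then s1 else if v = c then s1*s2 else s1*s2*s3 with hθdef
  have hθa : θ a = 1 := by simp [hθdef]
  have hθb : θ b = s1 := by simp [hθdef, Ne.symm hab]
  have hθc : θ c = s1*s2 := by simp [hθdef, Ne.symm hac, Ne.symm hbc]
  have hθd : θ d = s1*s2*s3 := by simp [hθdef, Ne.symm had, Ne.symm hbd, Ne.symm hcd]
  have hθsq : ∀ v, θ v * θ v = 1 := by
    intro v
    rcases hcov v with rfl|rfl|rfl|rfl <;>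
      [rw [hθa]; rw [hθb]; rw [hθc]; rw [hθd]] <;>
      rcases h1 with e1|e1 <;> rcases h2 with e2|e2 <;> rcases h3 with e3|e3 <;>
      simp [e1, e2, e3]
  have E1 : σ s(a,b) = θ a * θ b := by rw [hθa, hθb]; ring
  have E2 : σ s(b,c) = θ b * θ c := by
    rw [hθb, hθc, ← hs2]; rcases h1 with e1|e1 <;> rw [e1] <;> ring
  have E3 : σ s(c,d) = θ c * θ d := by
    rw [hθc, hθd, ← hs3]
    rcases h1 with e1|e1 <;> rcases h2 with e2|e2 <;> rw [e1, e2] <;> ring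
  have E4 : σ s(a,d) = θ a * θ d := by
    rw [hθa, hθd]
    rcases h1 with e1|e1 <;> rcases h2 with e2|e2 <;> rcases h3 with e3|e3 <;>
      rw [e1, e2, e3] at hbal ⊢ <;> linarith
  set S : Set (Sym2 (Fin 4)) := {s(a,b), s(b,c), s(c,d), s(a,d)} with hS
  set C : SimpleGraph (Fin 4) := SimpleGraph.fromEdgeSet S with hC
  set M : Set (Sym2 (Fin 4)) := {s(a,c), s(b,d)} with hM
  have hCadj : ∀ u v, C.Adj u v ↔ (s(u,v) ∈ S ∧ u ≠ v) := fun u v => SimpleGraph.fromEdgeSet_adj S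
  have hCab : C.Adj a b := by rw [hCadj]; exact ⟨by simp [hS], hab⟩
  have hCbc : C.Adj b c := by rw [hCadj]; exact ⟨by simp [hS], hbc⟩
  have hCcd : C.Adj c d := by rw [hCadj]; exact ⟨by simp [hS], hcd⟩
  have hCad : C.Adj a d := by rw [hCadj]; exact ⟨by simp [hS], had⟩
  have hedge : ∀ u v, C.Adj u v → σ s(u,v) = θ u * θ v := by
    intro u v huv
    rw [hCadj] at huv
    obtain ⟨hmem, hne⟩ := huv
    simp only [hS, Set.mem_insert_iff, Set.mem_singleton_iff, Sym2.eq_iff] at hmem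
    rcases hmem with (⟨rfl,rfl⟩|⟨rfl,rfl⟩)|(⟨rfl,rfl⟩|⟨rfl,rfl⟩)|(⟨rfl,rfl⟩|⟨rfl,rfl⟩)|(⟨rfl,rfl⟩|⟨rfl,rfl⟩)
    · exact E1
    · rw [Sym2.eq_swap]; rw [E1]; ring
    · exact E2
    · rw [Sym2.eq_swap]; rw [E2]; ring
    · exact E3
    · rw [Sym2.eq_swap]; rw [E3]; ring
    · exact E4
    · rw [Sym2.eq_swap]; rw [E4]; ring
  have hCedge : C.edgeSet = S := by
    rw [hC, SimpleGraph.edgeSet_fromEdgeSet]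
    ext e
    simp only [Set.mem_diff, Set.mem_setOf_eq, and_iff_left_iff_imp]
    intro he
    simp only [hS, Set.mem_insert_iff, Set.mem_singleton_iff] at he
    rcases he with rfl|rfl|rfl|rfl <;> simp [Sym2.isDiag_iff_proj_eq, hab, hbc, hcd, had]
  -- the coloring
  have hθval : ∀ v, θ v = 1 ∨ θ v = -1 :=
    fun v => Int.isUnit_iff.mp (IsUnit.of_mul_eq_one _ (hθsq v))
  have hθne0 : ∀ v, θ v ≠ 0 := by
    intro v; rcases hθval v with h|h <;> rw [h] <;> norm_num
  set f : Fin 4 → Sym2 (Fin 4) → ℤ := fun u e =>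
    if e = s(a,b) then (if u = a then θ a else -θ b)
    else if e = s(b,c) then (if u = b then θ b else -θ c)
    else if e = s(c,d) then (if u = c then θ c else -θ d)
    else if e = s(a,d) then (if u = d then θ d else -θ a)
    else 0 with hf
  have fab_a : f a s(a,b) = θ a := by
    simp [hf, Sym2.eq_iff, hab, hac, had, hbc, hbd, hcd, Ne.symm hab, Ne.symm hac, Ne.symm had, Ne.symm hbc, Ne.symm hbd, Ne.symm hcd]
  have fab_b : f b s(a,b) = -θ b := by
    simp [hf, Sym2.eq_iff, hab, hac, had, hbc, hbd, hcd, Ne.symm hab, Ne.symm hac, Ne.symm had, Ne.symm hbc, Ne.symm hbd, Ne.symm hcd]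
  have fbc_b : f b s(b,c) = θ b := by
    simp [hf, Sym2.eq_iff, hab, hac, had, hbc, hbd, hcd, Ne.symm hab, Ne.symm hac, Ne.symm had, Ne.symm hbc, Ne.symm hbd, Ne.symm hcd]
  have fbc_c : f c s(b,c) = -θ c := by
    simp [hf, Sym2.eq_iff, hab, hac, had, hbc, hbd, hcd, Ne.symm hab, Ne.symm hac, Ne.symm had, Ne.symm hbc, Ne.symm hbd, Ne.symm hcd]
  have fcd_c : f c s(c,d) = θ c := by
    simp [hf, Sym2.eq_iff, hab, hac, had, hbc, hbd, hcd, Ne.symm hab, Ne.symm hac, Ne.symm had, Ne.symm hbc, Ne.symm hbd, Ne.symm hcd]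
  have fcd_d : f d s(c,d) = -θ d := by
    simp [hf, Sym2.eq_iff, hab, hac, had, hbc, hbd, hcd, Ne.symm hab, Ne.symm hac, Ne.symm had, Ne.symm hbc, Ne.symm hbd, Ne.symm hcd]
  have fad_d : f d s(a,d) = θ d := by
    simp [hf, Sym2.eq_iff, hab, hac, had, hbc, hbd, hcd, Ne.symm hab, Ne.symm hac, Ne.symm had, Ne.symm hbc, Ne.symm hbd, Ne.symm hcd]
  have fad_a : f a s(a,d) = -θ a := by
    simp [hf, Sym2.eq_iff, hab, hac, had, hbc, hbd, hcd, Ne.symm hab, Ne.symm hac, Ne.symm had, Ne.symm hbc, Ne.symm hbd, Ne.symm hcd]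
  have fac_a : f a s(a,c) = 0 := by
    simp [hf, Sym2.eq_iff, hab, hac, had, hbc, hbd, hcd, Ne.symm hab, Ne.symm hac, Ne.symm had, Ne.symm hbc, Ne.symm hbd, Ne.symm hcd]
  have fac_c : f c s(a,c) = 0 := by
    simp [hf, Sym2.eq_iff, hab, hac, had, hbc, hbd, hcd, Ne.symm hab, Ne.symm hac, Ne.symm had, Ne.symm hbc, Ne.symm hbd, Ne.symm hcd]
  have fbd_b : f b s(b,d) = 0 := by
    simp [hf, Sym2.eq_iff, hab, hac, had, hbc, hbd, hcd, Ne.symm hab, Ne.symm hac, Ne.symm had, Ne.symm hbc, Ne.symm hbd, Ne.symm hcd]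
  have fbd_d : f d s(b,d) = 0 := by
    simp [hf, Sym2.eq_iff, hab, hac, had, hbc, hbd, hcd, Ne.symm hab, Ne.symm hac, Ne.symm had, Ne.symm hbc, Ne.symm hbd, Ne.symm hcd]
  have hne1 : ∀ v, θ v ≠ -θ v := by
    intro v h
    exact hθne0 v (by omega)
  have hcol : Colorable (completeGraph (Fin 4)) σ 3 := by
    refine ⟨f, ?_, ?_, ?_⟩
    · intro u v _
      have hv3 : f u s(u,v) = 0 ∨ f u s(u,v) = 1 ∨ f u s(u,v) = -1 := by
        simp only [hf]
        split_ifs <;>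
          first
            | exact Or.inl rfl
            | (rcases hθval a with h|h <;> rw [h] <;> norm_num)
            | (rcases hθval b with h|h <;> rw [h] <;> norm_num)
            | (rcases hθval c with h|h <;> rw [h] <;> norm_num)
            | (rcases hθval d with h|h <;> rw [h] <;> norm_num)
      refine ⟨?_, fun h => absurd h (by decide)⟩
      rcases hv3 with h|h|h <;> rw [h] <;> norm_num
    · intro u v huv
      rcases hcov u with hu|hu|hu|hu <;> rcases hcov v with hv|hv|hv|hv <;> rw [hu, hv]
      · exact absurd (hu.trans hv.symm) huv.ne
      · rw [fab_a, fab_b, E1]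
        first | linear_combination θ a * hθsq b | linear_combination -θ a * hθsq b
      · rw [fac_a, fac_c]; ring
      · rw [fad_a, fad_d, E4]
        first | linear_combination θ a * hθsq d | linear_combination -θ a * hθsq d
      · rw [(Sym2.eq_swap : s(b,a) = s(a,b)), fab_b, fab_a, E1]
        first | linear_combination θ b * hθsq a | linear_combination -θ b * hθsq a
      · exact absurd (hu.trans hv.symm) huv.ne
      · rw [fbc_b, fbc_c, E2]
        first | linear_combination θ b * hθsq c | linear_combination -θ b * hθsq c
      · rw [fbd_b, fbd_d]; ring
      · rw [(Sym2.eq_swap : s(c,a) = s(a,c)), fac_c, fac_a]; ring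
      · rw [(Sym2.eq_swap : s(c,b) = s(b,c)), fbc_c, fbc_b, E2]
        first | linear_combination θ c * hθsq b | linear_combination -θ c * hθsq b
      · exact absurd (hu.trans hv.symm) huv.ne
      · rw [fcd_c, fcd_d, E3]
        first | linear_combination θ c * hθsq d | linear_combination -θ c * hθsq d
      · rw [(Sym2.eq_swap : s(d,a) = s(a,d)), fad_d, fad_a, E4]
        first | linear_combination θ d * hθsq a | linear_combination -θ d * hθsq a
      · rw [(Sym2.eq_swap : s(d,b) = s(b,d)), fbd_d, fbd_b]; ring
      · rw [(Sym2.eq_swap : s(d,c) = s(c,d)), fcd_d, fcd_c, E3]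
        first | linear_combination θ d * hθsq c | linear_combination -θ d * hθsq c
      · exact absurd (hu.trans hv.symm) huv.ne
    · intro u v w huv huw hvw
      rcases hcov u with hu|hu|hu|hu <;> rcases hcov v with hv|hv|hv|hv <;>
        rcases hcov w with hw|hw|hw|hw <;>
        first
          | exact absurd (hu.trans hv.symm) huv.ne
          | exact absurd (hu.trans hw.symm) huw.ne
          | exact absurd (hv.trans hw.symm) hvw
          | (rw [hu, hv, hw]
             simp [hf, Sym2.eq_iff, hab, hac, had, hbc, hbd, hcd, Ne.symm hab, Ne.symm hac,
               Ne.symm had, Ne.symm hbc, Ne.symm hbd, Ne.symm hcd, hθne0 a, hθne0 b, hθne0 c, hθne0 d,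
               (hθne0 a).symm, (hθne0 b).symm, (hθne0 c).symm, (hθne0 d).symm,
               hne1 a, hne1 b, hne1 c, hne1 d, (hne1 a).symm, (hne1 b).symm,
               (hne1 c).symm, (hne1 d).symm])
  refine ⟨hcol, M, C, ⟨?_, ?_⟩, ?_, ?_, ?_, ?_, ?_, ?_, ?_⟩
  · -- M ⊆ edgeSet
    intro e he
    simp only [hM, Set.mem_insert_iff, Set.mem_singleton_iff] at he
    rcases he with rfl|rfl <;>
      simp [completeGraph, SimpleGraph.mem_edgeSet, SimpleGraph.top_adj, hac, hbd]
  · -- matching property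
    intro e he e' he' v hv hv'
    simp only [hM, Set.mem_insert_iff, Set.mem_singleton_iff] at he he'
    rcases he with rfl|rfl <;> rcases he' with rfl|rfl <;> try rfl
    all_goals {
      rw [Sym2.mem_iff] at hv hv'
      rcases hv with rfl|rfl <;> rcases hv' with h|h <;>
        first
          | exact absurd h hab | exact absurd h hbc.symm | exact absurd h had
          | exact absurd h hcd.symm | exact absurd h hac | exact absurd h hbc
          | exact absurd h hbd | exact absurd h hcd | exact absurd h hac.symm
          | exact absurd h had.symm | exact absurd h hbd.symm | exact absurd h hab.symm }
  · -- perfect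
    intro v
    rcases hcov v with h|h|h|h
    · exact ⟨s(a,c), by simp [hM], by rw [h]; simp⟩
    · exact ⟨s(b,d), by simp [hM], by rw [h]; simp⟩
    · exact ⟨s(a,c), by simp [hM], by rw [h]; simp⟩
    · exact ⟨s(b,d), by simp [hM], by rw [h]; simp⟩
  · -- subgraph
    intro u v huv
    exact huv.ne
  · -- connected
    have hra : ∀ v, C.Reachable a v := by
      intro v
      rcases hcov v with h|h|h|h <;> rw [h]
      · exact hCab.reachable
      · exact hCab.reachable.trans hCbc.reachable
      · exact hCad.reachable
    have hpre : C.Preconnected := fun u v => ((hra u).symm.trans (hra v))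
    exact ⟨hpre⟩
  · -- degrees
    intro v
    have hnbr : ∀ x y z : Fin 4, y ≠ z → C.neighborSet x = {y, z} → deg C x = 2 := by
      intro x y z hyz hset
      rw [deg, hset, Set.ncard_pair hyz]
    have hfwd : ∀ x w : Fin 4, C.Adj x w →
        (x = a ∧ w = b) ∨ (x = b ∧ w = a) ∨ (x = b ∧ w = c) ∨ (x = c ∧ w = b) ∨
        (x = c ∧ w = d) ∨ (x = d ∧ w = c) ∨ (x = a ∧ w = d) ∨ (x = d ∧ w = a) := by
      intro x w hxw
      rw [hCadj] at hxw
      obtain ⟨hmem, _⟩ := hxw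
      simp only [hS, Set.mem_insert_iff, Set.mem_singleton_iff, Sym2.eq_iff] at hmem
      rcases hmem with (⟨rfl,rfl⟩|⟨rfl,rfl⟩)|(⟨rfl,rfl⟩|⟨rfl,rfl⟩)|(⟨rfl,rfl⟩|⟨rfl,rfl⟩)|(⟨rfl,rfl⟩|⟨rfl,rfl⟩) <;> simp
    rcases hcov v with h|h|h|h <;> rw [h]
    · refine hnbr a b d hbd ?_
      ext x
      simp only [SimpleGraph.mem_neighborSet, Set.mem_insert_iff, Set.mem_singleton_iff]
      constructor
      · intro hx
        rcases hfwd a x hx with ⟨_,h'⟩|⟨h',_⟩|⟨h',_⟩|⟨h',_⟩|⟨h',_⟩|⟨h',_⟩|⟨_,h'⟩|⟨h',_⟩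
        · exact Or.inl h'
        · exact absurd h' hab
        · exact absurd h' hab
        · exact absurd h' hac
        · exact absurd h' hac
        · exact absurd h' had
        · exact Or.inr h'
        · exact absurd h' had
      · rintro (rfl|rfl)
        · exact hCab
        · exact hCad
    · refine hnbr b a c hac ?_
      ext x
      simp only [SimpleGraph.mem_neighborSet, Set.mem_insert_iff, Set.mem_singleton_iff]
      constructor
      · intro hx
        rcases hfwd b x hx with ⟨h',_⟩|⟨_,h'⟩|⟨_,h'⟩|⟨h',_⟩|⟨h',_⟩|⟨h',_⟩|⟨h',_⟩|⟨h',_⟩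
        · exact absurd h' hab.symm
        · exact Or.inl h'
        · exact Or.inr h'
        · exact absurd h' hbc
        · exact absurd h' hbc
        · exact absurd h' hbd
        · exact absurd h' hab.symm
        · exact absurd h' hbd
      · rintro (rfl|rfl)
        · exact hCab.symm
        · exact hCbc
    · refine hnbr c b d hbd ?_
      ext x
      simp only [SimpleGraph.mem_neighborSet, Set.mem_insert_iff, Set.mem_singleton_iff]
      constructor
      · intro hx
        rcases hfwd c x hx with ⟨h',_⟩|⟨h',_⟩|⟨h',_⟩|⟨_,h'⟩|⟨_,h'⟩|⟨h',_⟩|⟨h',_⟩|⟨h',_⟩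
        · exact absurd h' hac.symm
        · exact absurd h' hbc.symm
        · exact absurd h' hbc.symm
        · exact Or.inl h'
        · exact Or.inr h'
        · exact absurd h' hcd
        · exact absurd h' hac.symm
        · exact absurd h' hcd
      · rintro (rfl|rfl)
        · exact hCbc.symm
        · exact hCcd
    · refine hnbr d a c hac ?_
      ext x
      simp only [SimpleGraph.mem_neighborSet, Set.mem_insert_iff, Set.mem_singleton_iff]
      constructor
      · intro hx
        rcases hfwd d x hx with ⟨h',_⟩|⟨h',_⟩|⟨h',_⟩|⟨h',_⟩|⟨h',_⟩|⟨_,h'⟩|⟨h',_⟩|⟨_,h'⟩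
        · exact absurd h' had.symm
        · exact absurd h' hbd.symm
        · exact absurd h' hbd.symm
        · exact absurd h' hcd.symm
        · exact absurd h' hcd.symm
        · exact Or.inr h'
        · exact absurd h' had.symm
        · exact Or.inl h'
      · rintro (rfl|rfl)
        · exact hCad.symm
        · exact hCcd.symm
  · -- balanced
    intro u w _
    rw [walk_prod σ hθsq hedge w]
    exact hθsq u
  · -- disjoint
    rw [Set.disjoint_left]
    intro e he
    simp only [hM, Set.mem_insert_iff, Set.mem_singleton_iff] at he
    rw [hCedge]
    rcases he with rfl|rfl <;>
      simp [hS, Sym2.eq_iff, hab, hbc, hcd, had, hac, hbd, Ne.symm hab, Ne.symm hbc,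
        Ne.symm hcd, Ne.symm had, Ne.symm hac, Ne.symm hbd]
  · -- union
    rw [hCedge]
    ext e
    simp only [Set.mem_union, hM, hS, Set.mem_insert_iff, Set.mem_singleton_iff]
    constructor
    · rintro ((rfl|rfl)|rfl|rfl|rfl|rfl) <;>
        simp [completeGraph, SimpleGraph.mem_edgeSet, hab, hbc, hcd, had, hac, hbd]
    · intro he
      induction e with
      | h x y =>
        have hxy : x ≠ y := by
          intro h; subst h; simp [completeGraph] at he
        rcases hcov x with hx|hx|hx|hx <;> rcases hcov y with hy|hy|hy|hy <;> rw [hx, hy] <;>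
          first
            | exact absurd (hx.trans hy.symm) hxy
            | simp [Sym2.eq_iff]

private lemma lower (σ : Sym2 (Fin 4) → ℤ) (n : ℕ)
    (hn : Colorable (completeGraph (Fin 4)) σ n) : 3 ≤ n := by
  by_contra hlt
  push_neg at hlt
  obtain ⟨f, hmem, _, hdist⟩ := hn
  have a01 : (completeGraph (Fin 4)).Adj 0 1 := by simp [completeGraph]
  have a02 : (completeGraph (Fin 4)).Adj 0 2 := by simp [completeGraph]
  have a03 : (completeGraph (Fin 4)).Adj 0 3 := by simp [completeGraph]
  obtain ⟨b1, e1⟩ := hmem 0 1 a01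
  obtain ⟨b2, e2⟩ := hmem 0 2 a02
  obtain ⟨b3, e3⟩ := hmem 0 3 a03
  have d12 := hdist 0 1 2 a01 a02 (by decide)
  have d13 := hdist 0 1 3 a01 a03 (by decide)
  have d23 := hdist 0 2 3 a02 a03 (by decide)
  interval_cases n
  · have := e1 (by decide)
    omega
  · omega
  · have x1 := e1 (by decide)
    have x2 := e2 (by decide)
    have x3 := e3 (by decide)
    omega

/-- `K₄` is of class `1^±`: every signature attains `χ' = 3`, and `K₄` decomposes into a
perfect matching together with a balanced spanning 4-cycle. -/
theorem K4_class1 (σ : Sym2 (Fin 4) → ℤ)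
    (hσ : IsSignature (completeGraph (Fin 4)) σ) :
    chromIndex (completeGraph (Fin 4)) σ = 3 ∧
    ∃ (M : Set (Sym2 (Fin 4))) (C : SimpleGraph (Fin 4)),
      IsMatchingSet (completeGraph (Fin 4)) M ∧ (∀ v : Fin 4, ∃ e ∈ M, v ∈ e) ∧
      C ≤ completeGraph (Fin 4) ∧ C.Connected ∧ (∀ v : Fin 4, deg C v = 2) ∧
      Balanced C σ ∧ Disjoint M C.edgeSet ∧
      M ∪ C.edgeSet = (completeGraph (Fin 4)).edgeSet := by
  have adj : ∀ u v : Fin 4, u ≠ v → (completeGraph (Fin 4)).Adj u v := fun u v h => h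
  have sg01 := hσ s(0,1) ((completeGraph (Fin 4)).mem_edgeSet.mpr (adj 0 1 (by decide)))
  have sg02 := hσ s(0,2) ((completeGraph (Fin 4)).mem_edgeSet.mpr (adj 0 2 (by decide)))
  have sg03 := hσ s(0,3) ((completeGraph (Fin 4)).mem_edgeSet.mpr (adj 0 3 (by decide)))
  have sg12 := hσ s(1,2) ((completeGraph (Fin 4)).mem_edgeSet.mpr (adj 1 2 (by decide)))
  have sg13 := hσ s(1,3) ((completeGraph (Fin 4)).mem_edgeSet.mpr (adj 1 3 (by decide)))
  have sg23 := hσ s(2,3) ((completeGraph (Fin 4)).mem_edgeSet.mpr (adj 2 3 (by decide)))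
  have e32 : s((3:Fin 4),(2:Fin 4)) = s(2,3) := Sym2.eq_swap
  have e21 : s((2:Fin 4),(1:Fin 4)) = s(1,2) := Sym2.eq_swap
  have htri : σ s(0,1) * σ s(1,2) * σ s(2,3) * σ s(0,3) = 1
      ∨ σ s(0,1) * σ s(1,3) * σ s(3,2) * σ s(0,2) = 1
      ∨ σ s(0,2) * σ s(2,1) * σ s(1,3) * σ s(0,3) = 1 := by
    rw [e32, e21]
    rcases sg01 with p1|p1 <;> rcases sg02 with p2|p2 <;> rcases sg03 with p3|p3 <;>
      rcases sg12 with p4|p4 <;> rcases sg13 with p5|p5 <;> rcases sg23 with p6|p6 <;>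
      rw [p1, p2, p3, p4, p5, p6] <;> norm_num
  have hchrom : Colorable (completeGraph (Fin 4)) σ 3 → chromIndex (completeGraph (Fin 4)) σ = 3 :=
    fun h => le_antisymm (Nat.sInf_le h) (le_csInf ⟨3, h⟩ fun n hn => lower σ n hn)
  rcases htri with hbal|hbal|hbal
  · obtain ⟨hcol, hdecomp⟩ := key σ 0 1 2 3 (by decide) (by decide) (by decide) (by decide)
      (by decide) (by decide) sg01 sg12 sg23 sg03 sg02 sg13 hbal
    exact ⟨hchrom hcol, hdecomp⟩
  · obtain ⟨hcol, hdecomp⟩ := key σ 0 1 3 2 (by decide) (by decide) (by decide) (by decide)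
      (by decide) (by decide) sg01 sg13 (by rw [e32]; exact sg23) sg02 sg03 sg12 hbal
    exact ⟨hchrom hcol, hdecomp⟩
  · obtain ⟨hcol, hdecomp⟩ := key σ 0 2 1 3 (by decide) (by decide) (by decide) (by decide)
      (by decide) (by decide) sg02 (by rw [e21]; exact sg12) sg13 sg03 sg01 sg23 hbal
    exact ⟨hchrom hcol, hdecomp⟩
end
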